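/- arXiv:0806.2096 — 13 statements merged into one kernel-verified Lean document; each statement's English description precedes it below -/
import Mathlib

section
/- An antimatroidal point set S in ℤ² is closed under componentwise maximum (union): if (x_A,y_A) ∈ S and (x_B,y_B) ∈ S then (max(x_A,x_B), max(y_A,y_B)) ∈ S. -/
/-- `S` is an antimatroidal point set in the digital plane (points with
natural-number coordinates): finite, nonempty, accessible (A1), and
satisfying the exchange property (A2). -/
def IsAntimatroidal (S : Set (ℕ × ℕ)) : Prop :=
  S.Finite ∧ S.Nonempty ∧
  (∀ x y, (x, y) ∈ S → (x, y) ≠ (0, 0) →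
    (1 ≤ x ∧ (x - 1, y) ∈ S) ∨ (1 ≤ y ∧ (x, y - 1) ∈ S)) ∧
  (∀ a₁ a₂ b₁ b₂, (a₁, a₂) ∈ S → (b₁, b₂) ∈ S → ¬(a₁ ≤ b₁ ∧ a₂ ≤ b₂) →
    ((b₁ ≤ a₁ ∧ b₂ ≤ a₂) → ((b₁ + 1, b₂) ∈ S ∨ (b₁, b₂ + 1) ∈ S)) ∧
    ((a₁ ≤ b₁ ∧ b₂ ≤ a₂) → (b₁, b₂ + 1) ∈ S) ∧
    ((b₁ ≤ a₁ ∧ a₂ ≤ b₂) → (b₁ + 1, b₂) ∈ S))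

private lemma climb_up (S : Set (ℕ × ℕ)) (h : IsAntimatroidal S)
    (a₁ a₂ b₁ b₂ : ℕ) (hA : (a₁, a₂) ∈ S) (hB : (b₁, b₂) ∈ S)
    (h1 : a₁ ≤ b₁) (h2 : b₂ ≤ a₂) : (b₁, a₂) ∈ S := by
  obtain ⟨-, -, -, hA2⟩ := h
  induction' hn : a₂ - b₂ with n ih generalizing b₂
  · have : a₂ = b₂ := le_antisymm (by omega) h2
    rwa [this]
  · have hlt : b₂ < a₂ := by omega
    have := (hA2 a₁ a₂ b₁ b₂ hA hB (by omega)).2.1 ⟨h1, h2⟩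
    exact ih (b₂ + 1) this (by omega) (by omega)

private lemma climb_right (S : Set (ℕ × ℕ)) (h : IsAntimatroidal S)
    (a₁ a₂ b₁ b₂ : ℕ) (hA : (a₁, a₂) ∈ S) (hB : (b₁, b₂) ∈ S)
    (h1 : b₁ ≤ a₁) (h2 : a₂ ≤ b₂) : (a₁, b₂) ∈ S := by
  obtain ⟨-, -, -, hA2⟩ := h
  induction' hn : a₁ - b₁ with n ih generalizing b₁
  · have : a₁ = b₁ := le_antisymm (by omega) h1
    rwa [this]
  · have := (hA2 a₁ a₂ b₁ b₂ hA hB (by omega)).2.2 ⟨h1, h2⟩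
    exact ih (b₁ + 1) this (by omega) (by omega)

theorem closed_under_union (S : Set (ℕ × ℕ)) (h : IsAntimatroidal S)
    (A B : ℕ × ℕ) (hA : A ∈ S) (hB : B ∈ S) :
    (max A.1 B.1, max A.2 B.2) ∈ S := by
  obtain ⟨a₁, a₂⟩ := A
  obtain ⟨b₁, b₂⟩ := B
  simp only
  rcases le_total a₁ b₁ with h1 | h1 <;> rcases le_total a₂ b₂ with h2 | h2
  · rw [max_eq_right h1, max_eq_right h2]; exact hB
  · rw [max_eq_right h1, max_eq_left h2]; exact climb_up S h a₁ a₂ b₁ b₂ hA hB h1 h2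
  · rw [max_eq_left h1, max_eq_right h2]; exact climb_right S h a₁ a₂ b₁ b₂ hA hB h1 h2
  · rw [max_eq_left h1, max_eq_left h2]; exact hA
end

section
/- In an antimatroidal point set S, for any two points A, B ∈ S with A componentwise strictly contained in B (A ≤ B and A ≠ B), there is a chain A = X₀ ⊂ X₁ ⊂ ... ⊂ X_k = B of points of S where each X_{i+1} is obtained from X_i by incrementing exactly one coordinate by 1. -/
theorem chain_property (S : Set (ℕ × ℕ)) (h : IsAntimatroidal S)
    (A B : ℕ × ℕ) (hA : A ∈ S) (hB : B ∈ S)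
    (hle : A.1 ≤ B.1 ∧ A.2 ≤ B.2) (hne : A ≠ B) :
    ∃ (k : ℕ) (f : ℕ → ℕ × ℕ), f 0 = A ∧ f k = B ∧
      (∀ i ≤ k, f i ∈ S) ∧
      (∀ i < k, f (i + 1) = ((f i).1 + 1, (f i).2) ∨
                f (i + 1) = ((f i).1, (f i).2 + 1)) := by
  obtain ⟨-, -, -, hex⟩ := h
  -- one-step lemma
  have step : ∀ A : ℕ × ℕ, A ∈ S → A.1 ≤ B.1 → A.2 ≤ B.2 → A ≠ B →
      ∃ A' : ℕ × ℕ, A' ∈ S ∧ (A' = (A.1 + 1, A.2) ∨ A' = (A.1, A.2 + 1)) ∧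
        A'.1 ≤ B.1 ∧ A'.2 ≤ B.2 := by
    intro A hA h1 h2 hne
    have hnot : ¬(B.1 ≤ A.1 ∧ B.2 ≤ A.2) := by
      rintro ⟨g1, g2⟩
      exact hne (Prod.ext (le_antisymm h1 g1) (le_antisymm h2 g2))
    obtain ⟨e1, e2, e3⟩ := hex B.1 B.2 A.1 A.2 hB hA hnot
    rcases lt_or_eq_of_le h1 with hs1 | heq1
    · rcases lt_or_eq_of_le h2 with hs2 | heq2
      · rcases e1 ⟨h1, h2⟩ with hh | hh
        · exact ⟨_, hh, Or.inl rfl, hs1, h2⟩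
        · exact ⟨_, hh, Or.inr rfl, h1, hs2⟩
      · exact ⟨_, e3 ⟨h1, le_of_eq heq2.symm⟩, Or.inl rfl, hs1, h2⟩
    · have hs2 : A.2 < B.2 := by
        rcases lt_or_eq_of_le h2 with hs2 | heq2
        · exact hs2
        · exact absurd (Prod.ext heq1 heq2) hne
      exact ⟨_, e2 ⟨le_of_eq heq1.symm, h2⟩, Or.inr rfl, h1, hs2⟩
  -- main induction on the gap
  have main : ∀ n : ℕ, ∀ A : ℕ × ℕ, A ∈ S → A.1 ≤ B.1 → A.2 ≤ B.2 →
      B.1 + B.2 - (A.1 + A.2) = n →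
      ∃ (k : ℕ) (f : ℕ → ℕ × ℕ), f 0 = A ∧ f k = B ∧
        (∀ i ≤ k, f i ∈ S) ∧
        (∀ i < k, f (i + 1) = ((f i).1 + 1, (f i).2) ∨
                  f (i + 1) = ((f i).1, (f i).2 + 1)) := by
    intro n
    induction n with
    | zero =>
      intro A hA h1 h2 hd
      have hAB : A = B := by
        have : B.1 + B.2 ≤ A.1 + A.2 := Nat.le_of_sub_eq_zero hd
        exact Prod.ext (by omega) (by omega)
      exact ⟨0, fun _ => A, rfl, hAB, fun i _ => hA, fun i hi => absurd hi (Nat.not_lt_zero i)⟩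
    | succ n ih =>
      intro A hA h1 h2 hd
      have hne' : A ≠ B := by
        rintro rfl; omega
      obtain ⟨A', hA'S, hstep, h1', h2'⟩ := step A hA h1 h2 hne'
      have hd' : B.1 + B.2 - (A'.1 + A'.2) = n := by
        rcases hstep with rfl | rfl <;> simp at h1' h2' ⊢ <;> omega
      obtain ⟨k, f, hf0, hfk, hfS, hfstep⟩ := ih A' hA'S h1' h2' hd'
      refine ⟨k + 1, fun i => if i = 0 then A else f (i - 1), by simp, by simp [hfk], ?_, ?_⟩
      · intro i hi
        by_cases hi0 : i = 0
        · simp [hi0, hA]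
        · simp only [hi0, if_neg]
          exact hfS (i - 1) (by omega)
      · intro i hi
        by_cases hi0 : i = 0
        · subst hi0
          simp only [if_neg one_ne_zero, if_pos rfl]
          rcases hstep with hs | hs
          · exact Or.inl (by simp [hf0, hs])
          · exact Or.inr (by simp [hf0, hs])
        · have h1le : 1 ≤ i := Nat.one_le_iff_ne_zero.mpr hi0
          simp only [Nat.add_eq_zero, and_false, if_neg, hi0, Nat.add_sub_cancel]
          have := hfstep (i - 1) (by omega)
          have heq : i - 1 + 1 = i := by omega
          rw [heq] at this
          exact this
  exact main (B.1 + B.2 - (A.1 + A.2)) A hA hle.1 hle.2 rfl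
end

section
/- An antimatroidal point set S in ℤ² is orthogonally convex: for any y* and any x₁ ≤ x ≤ x₂, if (x₁,y*) ∈ S and (x₂,y*) ∈ S then (x,y*) ∈ S; and symmetrically for vertical lines. -/
theorem orthogonally_convex (S : Set (ℕ × ℕ)) (h : IsAntimatroidal S) :
    (∀ y x₁ x₂ x, (x₁, y) ∈ S → (x₂, y) ∈ S → x₁ ≤ x → x ≤ x₂ → (x, y) ∈ S) ∧
    (∀ x y₁ y₂ y, (x, y₁) ∈ S → (x, y₂) ∈ S → y₁ ≤ y → y ≤ y₂ → (x, y) ∈ S) := by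
  obtain ⟨-, -, -, hA2⟩ := h
  constructor
  · intro y x₁ x₂ x h₁ h₂ hx₁ hx₂
    induction x, hx₁ using Nat.le_induction with
    | base => exact h₁
    | succ n hn ih =>
      have hmem := ih (le_trans (Nat.le_succ n) hx₂)
      have hlt : n < x₂ := hx₂
      have := hA2 x₂ y n y h₂ hmem (by push_neg; intro h'; omega)
      exact (this.2.2 ⟨le_of_lt hlt, le_refl y⟩)
  · intro x y₁ y₂ y h₁ h₂ hy₁ hy₂
    induction y, hy₁ using Nat.le_induction with
    | base => exact h₁
    | succ n hn ih =>
      have hmem := ih (le_trans (Nat.le_succ n) hy₂)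
      have hlt : n < y₂ := hy₂
      have := hA2 x y₂ x n h₂ hmem (by push_neg; intro h'; omega)
      exact (this.2.1 ⟨le_refl x, le_of_lt hlt⟩)
end

section
/- An antimatroidal point set S in ℤ² is N₄-connected: any two points of S are joined by a path within S whose consecutive points differ by 1 in exactly one coordinate. -/
/-- `q` is an `N₄`-neighbor of `p`: they differ by `1` in exactly one coordinate. -/
def N4Step (p q : ℕ × ℕ) : Prop :=
  (q.1 = p.1 + 1 ∧ q.2 = p.2) ∨ (p.1 = q.1 + 1 ∧ q.2 = p.2) ∨
  (q.2 = p.2 + 1 ∧ q.1 = p.1) ∨ (p.2 = q.2 + 1 ∧ q.1 = p.1)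

theorem n4_connected (S : Set (ℕ × ℕ)) (h : IsAntimatroidal S)
    (A B : ℕ × ℕ) (hA : A ∈ S) (hB : B ∈ S) :
    ∃ (n : ℕ) (f : ℕ → ℕ × ℕ), f 0 = A ∧ f n = B ∧
      (∀ i ≤ n, f i ∈ S) ∧ (∀ i < n, N4Step (f i) (f (i + 1))) := by
  obtain ⟨-, -, hAcc, -⟩ := h
  -- Every point of S has an N4 path (within S) to (0,0).
  have key : ∀ p ∈ S, ∃ (n : ℕ) (f : ℕ → ℕ × ℕ), f 0 = p ∧ f n = (0, 0) ∧
      (∀ i ≤ n, f i ∈ S) ∧ (∀ i < n, N4Step (f i) (f (i + 1))) := by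
    intro p hp
    obtain ⟨k, hk⟩ : ∃ k, p.1 + p.2 = k := ⟨_, rfl⟩
    induction k using Nat.strong_induction_on generalizing p with
    | _ k ih =>
      by_cases hz : p = (0, 0)
      · exact ⟨0, fun _ => p, rfl, hz, fun i _ => hp, fun i hi => absurd hi (by omega)⟩
      · obtain ⟨x, y⟩ := p
        rcases hAcc x y hp hz with ⟨hx, hq⟩ | ⟨hy, hq⟩
        · obtain ⟨n, f, hf0, hfn, hfS, hfstep⟩ :=
            ih ((x - 1) + y) (by omega) (x - 1, y) hq rfl
          refine ⟨n + 1, fun i => if i = 0 then (x, y) else f (i - 1), by simp, ?_, ?_, ?_⟩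
          · simpa using hfn
          · intro i hi
            rcases Nat.eq_zero_or_pos i with h0 | h0
            · simpa [h0] using hp
            · simp only [Nat.pos_iff_ne_zero.mp h0, if_neg (Nat.pos_iff_ne_zero.mp h0)]
              exact hfS _ (by omega)
          · intro i hi
            rcases Nat.eq_zero_or_pos i with h0 | h0
            · subst h0
              show N4Step (x, y) (f 0)
              rw [hf0]
              exact Or.inr (Or.inl ⟨by omega, rfl⟩)
            · have h1 : i ≠ 0 := by omega
              have h2 : i + 1 ≠ 0 := by omega
              simp only [if_neg h1, if_neg h2]
              have : i + 1 - 1 = (i - 1) + 1 := by omega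
              rw [this]
              exact hfstep _ (by omega)
        · obtain ⟨n, f, hf0, hfn, hfS, hfstep⟩ :=
            ih (x + (y - 1)) (by omega) (x, y - 1) hq rfl
          refine ⟨n + 1, fun i => if i = 0 then (x, y) else f (i - 1), by simp, ?_, ?_, ?_⟩
          · simpa using hfn
          · intro i hi
            rcases Nat.eq_zero_or_pos i with h0 | h0
            · simpa [h0] using hp
            · simp only [Nat.pos_iff_ne_zero.mp h0, if_neg (Nat.pos_iff_ne_zero.mp h0)]
              exact hfS _ (by omega)
          · intro i hi
            rcases Nat.eq_zero_or_pos i with h0 | h0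
            · subst h0
              show N4Step (x, y) (f 0)
              rw [hf0]
              exact Or.inr (Or.inr (Or.inr ⟨by omega, rfl⟩))
            · have h1 : i ≠ 0 := by omega
              have h2 : i + 1 ≠ 0 := by omega
              simp only [if_neg h1, if_neg h2]
              have : i + 1 - 1 = (i - 1) + 1 := by omega
              rw [this]
              exact hfstep _ (by omega)
  have symm : ∀ p q, N4Step p q → N4Step q p := by
    intro p q hpq
    unfold N4Step at *
    tauto
  obtain ⟨n, fA, hA0, hAn, hAS, hAstep⟩ := key A hA
  obtain ⟨m, fB, hB0, hBm, hBS, hBstep⟩ := key B hB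
  refine ⟨n + m, fun i => if i ≤ n then fA i else fB (n + m - i), by simp [hA0], ?_, ?_, ?_⟩
  · rcases Nat.eq_zero_or_pos m with hm | hm
    · have : fB 0 = (0, 0) := by rw [hm] at hBm; exact hBm
      have : B = (0, 0) := by rw [← hB0, this]
      simp [hm, hAn, this]
    · have h1 : ¬ n + m ≤ n := by omega
      simp [h1, hB0]
  · intro i hi
    by_cases h1 : i ≤ n
    · simp only [if_pos h1]; exact hAS _ h1
    · simp only [if_neg h1]; exact hBS _ (by omega)
  · intro i hi
    by_cases h1 : i + 1 ≤ n
    · simp only [if_pos h1, if_pos (by omega : i ≤ n)]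
      exact hAstep _ (by omega)
    · by_cases h2 : i ≤ n
      · -- i = n, crossing point
        have hin : i = n := by omega
        have hm : 1 ≤ m := by omega
        simp only [if_pos h2, if_neg h1]
        have hcross : n + m - (i + 1) = m - 1 := by omega
        rw [hcross, hin, hAn]
        have : fB m = (0, 0) := hBm
        have hst := hBstep (m - 1) (by omega)
        have : m - 1 + 1 = m := by omega
        rw [this] at hst
        rw [hBm] at hst
        exact symm _ _ hst
      · simp only [if_neg h1, if_neg h2]
        have hst := hBstep (n + m - (i + 1)) (by omega)
        have : n + m - (i + 1) + 1 = n + m - i := by omega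
        rw [this] at hst
        exact symm _ _ hst
end

section
/- An antimatroidal point set S in the plane is closed under componentwise minimum (intersection): if (x_A,y_A) ∈ S and (x_B,y_B) ∈ S then (min(x_A,x_B), min(y_A,y_B)) ∈ S. -/
theorem closed_under_intersection (S : Set (ℕ × ℕ)) (h : IsAntimatroidal S)
    (A B : ℕ × ℕ) (hA : A ∈ S) (hB : B ∈ S) :
    (min A.1 B.1, min A.2 B.2) ∈ S := by
  obtain ⟨-, -, hacc, hexc⟩ := h
  have key : ∀ n a₁ a₂ b₁ b₂, a₁ + a₂ = n → (a₁, a₂) ∈ S → (b₁, b₂) ∈ S →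
      a₁ ≤ b₁ → b₂ ≤ a₂ → (a₁, b₂) ∈ S := by
    intro n
    induction n using Nat.strong_induction_on with
    | _ n IH =>
      intro a₁ a₂ b₁ b₂ hn ha hb hab hba
      rcases eq_or_lt_of_le hba with h1 | h1
      · subst h1; exact ha
      · have ha2 : 1 ≤ a₂ := Nat.one_le_iff_ne_zero.mpr (by omega)
        rcases hacc a₁ a₂ ha (by simp; omega) with ⟨hx, ha'⟩ | ⟨hy, ha'⟩
        · -- (a₁ - 1, a₂) ∈ S
          have step : (a₁ - 1, b₂) ∈ S :=
            IH (a₁ - 1 + a₂) (by omega) _ _ b₁ b₂ rfl ha' hb (by omega) hba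
          have := (hexc b₁ b₂ (a₁ - 1) b₂ hb step (by omega)).2.2 ⟨by omega, le_refl _⟩
          have heq : a₁ - 1 + 1 = a₁ := by omega
          rwa [heq] at this
        · -- (a₁, a₂ - 1) ∈ S
          exact IH (a₁ + (a₂ - 1)) (by omega) _ _ b₁ b₂ rfl ha' hb hab (by omega)
  obtain ⟨a₁, a₂⟩ := A
  obtain ⟨b₁, b₂⟩ := B
  simp only
  rcases le_total a₁ b₁ with h1 | h1 <;> rcases le_total a₂ b₂ with h2 | h2
  · rw [min_eq_left h1, min_eq_left h2]; exact hA
  · rw [min_eq_left h1, min_eq_right h2]; exact key _ _ _ _ _ rfl hA hB h1 h2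
  · rw [min_eq_right h1, min_eq_left h2]; exact key _ _ _ _ _ rfl hB hA h1 h2
  · rw [min_eq_right h1, min_eq_right h2]; exact hB
end

section
/- In an antimatroidal point set S, for any two componentwise incomparable points A and B of S, the entire rectangle of lattice points between A ∩ B = (min(x_A,x_B), min(y_A,y_B)) and A ∪ B = (max(x_A,x_B), max(y_A,y_B)) is contained in S. -/
/-- Right move: from a point strictly left of `A` but at least as high, step right. -/
lemma right_move {S : Set (ℕ × ℕ)} (h : IsAntimatroidal S) {a₁ a₂ x y : ℕ}
    (hA : (a₁, a₂) ∈ S) (hP : (x, y) ∈ S) (hx : x < a₁) (hy : a₂ ≤ y) :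
    (x + 1, y) ∈ S := by
  have := (h.2.2.2 a₁ a₂ x y hA hP (by omega)).2.2
  exact this ⟨by omega, hy⟩

/-- Up move: from a point strictly below `B` but at least as far right, step up. -/
lemma up_move {S : Set (ℕ × ℕ)} (h : IsAntimatroidal S) {b₁ b₂ x y : ℕ}
    (hB : (b₁, b₂) ∈ S) (hP : (x, y) ∈ S) (hx : b₁ ≤ x) (hy : y < b₂) :
    (x, y + 1) ∈ S := by
  have := (h.2.2.2 b₁ b₂ x y hB hP (by omega)).2.1
  exact this ⟨hx, by omega⟩

/-- The meet (bottom-left corner) of two incomparable points is in `S`. -/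
lemma corner_mem {S : Set (ℕ × ℕ)} (h : IsAntimatroidal S) :
    ∀ n a₁ a₂ b₁ b₂, a₁ + a₂ = n → (a₁, a₂) ∈ S → (b₁, b₂) ∈ S →
      b₁ < a₁ → a₂ < b₂ → (b₁, a₂) ∈ S := by
  intro n
  induction n using Nat.strong_induction_on with
  | _ n ih =>
    intro a₁ a₂ b₁ b₂ hn hA hB h1 h2
    have hne : (a₁, a₂) ≠ ((0 : ℕ), (0 : ℕ)) := by
      intro hc; rw [Prod.mk.injEq] at hc; omega
    rcases h.2.2.1 a₁ a₂ hA hne with ⟨hx1, hmem⟩ | ⟨hy1, hmem⟩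
    · rcases eq_or_lt_of_le (Nat.le_sub_one_of_lt h1 : b₁ ≤ a₁ - 1) with heq | hlt
      · rwa [heq]
      · exact ih (a₁ - 1 + a₂) (by omega) (a₁ - 1) a₂ b₁ b₂ rfl hmem hB hlt h2
    · have hcorner : (b₁, a₂ - 1) ∈ S :=
        ih (a₁ + (a₂ - 1)) (by omega) a₁ (a₂ - 1) b₁ b₂ rfl hmem hB h1 (by omega)
      have := up_move h hB hcorner le_rfl (by omega : a₂ - 1 < b₂)
      rwa [Nat.sub_add_cancel hy1] at this

/-- Fill the rectangle from the corner. -/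
lemma rect_fill {S : Set (ℕ × ℕ)} (h : IsAntimatroidal S) {a₁ a₂ b₁ b₂ : ℕ}
    (hA : (a₁, a₂) ∈ S) (hB : (b₁, b₂) ∈ S)
    (hc : (b₁, a₂) ∈ S) :
    ∀ x y, b₁ ≤ x → x ≤ a₁ → a₂ ≤ y → y ≤ b₂ → (x, y) ∈ S := by
  have col : ∀ d, a₂ + d ≤ b₂ → (b₁, a₂ + d) ∈ S := by
    intro d
    induction d with
    | zero => intro _; exact hc
    | succ k ihk =>
      intro hk
      have := up_move h hB (ihk (by omega)) le_rfl (by omega)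
      exact this
  have row : ∀ e y, a₂ ≤ y → y ≤ b₂ → b₁ + e ≤ a₁ → (b₁ + e, y) ∈ S := by
    intro e
    induction e with
    | zero =>
      intro y hy1 hy2 _
      have := col (y - a₂) (by omega)
      simpa [Nat.add_sub_cancel' hy1] using this
    | succ k ihk =>
      intro y hy1 hy2 hk
      have := right_move h hA (ihk y hy1 hy2 (by omega)) (by omega) hy1
      exact this
  intro x y hx1 hx2 hy1 hy2
  have := row (x - b₁) y hy1 hy2 (by omega)
  rwa [Nat.add_sub_cancel' hx1] at this

theorem rectangle_subset (S : Set (ℕ × ℕ)) (h : IsAntimatroidal S)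
    (A B : ℕ × ℕ) (hA : A ∈ S) (hB : B ∈ S)
    (hAB : ¬(A.1 ≤ B.1 ∧ A.2 ≤ B.2)) (hBA : ¬(B.1 ≤ A.1 ∧ B.2 ≤ A.2)) :
    ∀ x y, min A.1 B.1 ≤ x → x ≤ max A.1 B.1 →
      min A.2 B.2 ≤ y → y ≤ max A.2 B.2 → (x, y) ∈ S := by
  obtain ⟨a₁, a₂⟩ := A
  obtain ⟨b₁, b₂⟩ := B
  simp only at hAB hBA ⊢
  intro x y hx1 hx2 hy1 hy2
  rcases (by omega : (b₁ < a₁ ∧ a₂ < b₂) ∨ (a₁ < b₁ ∧ b₂ < a₂)) with ⟨h1, h2⟩ | ⟨h1, h2⟩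
  · have hc := corner_mem h (a₁ + a₂) a₁ a₂ b₁ b₂ rfl hA hB h1 h2
    exact rect_fill h hA hB hc x y (by omega) (by omega) (by omega) (by omega)
  · have hc := corner_mem h (b₁ + b₂) b₁ b₂ a₁ a₂ rfl hB hA h1 h2
    exact rect_fill h hB hA hc x y (by omega) (by omega) (by omega) (by omega)
end

section
/- Let S be an antimatroidal point set with lower boundary B_lower = {(x,y) ∈ S : (x+1,y) ∉ S ∨ (x,y-1) ∉ S ∨ (x+1,y-1) ∉ S}. Then any two points of B_lower are componentwise comparable; that is, B_lower, listed in lexicographic order, forms a monotone increasing sequence from (0,0) to (x_max, y_max). -/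
/-- `p` belongs to the lower boundary of `S`: `p ∈ S` and one of the points
`(x+1,y)`, `(x,y-1)`, `(x+1,y-1)` is missing from `S` (points with a negative
coordinate, i.e. when `y = 0`, count as missing). -/
def InLowerBoundary (S : Set (ℕ × ℕ)) (p : ℕ × ℕ) : Prop :=
  p ∈ S ∧ ((p.1 + 1, p.2) ∉ S ∨ (p.2 = 0 ∨ (p.1, p.2 - 1) ∉ S) ∨
    (p.2 = 0 ∨ (p.1 + 1, p.2 - 1) ∉ S))

private lemma key_incomp (S : Set (ℕ × ℕ)) (h : IsAntimatroidal S)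
    (p q : ℕ × ℕ) (hp : InLowerBoundary S p) (hq : InLowerBoundary S q)
    (h1 : p.1 < q.1) (h2 : q.2 < p.2) : False := by
  obtain ⟨hfin, hne, hA1, hA2⟩ := h
  obtain ⟨p1, p2⟩ := p
  obtain ⟨q1, q2⟩ := q
  simp only at h1 h2
  obtain ⟨hpS, hpb⟩ := hp
  obtain ⟨hqS, hqb⟩ := hq
  -- step 1 : (p1+1, p2) ∈ S
  have s1 : (p1 + 1, p2) ∈ S := by
    have := hA2 q1 q2 p1 p2 hqS hpS (by omega)
    exact this.2.2 ⟨by omega, by omega⟩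
  -- step 2 : vertical segment at x = q1
  have s2 : ∀ n, q2 + n ≤ p2 → (q1, q2 + n) ∈ S := by
    intro n
    induction n with
    | zero => intro _; simpa using hqS
    | succ k ih =>
      intro hk
      have hmem := ih (by omega)
      have := (hA2 p1 p2 q1 (q2 + k) hpS hmem (by omega)).2.1 ⟨by omega, by omega⟩
      exact this
  have s2' : (q1, p2 - 1) ∈ S := by
    have := s2 (p2 - 1 - q2) (by omega)
    rwa [show q2 + (p2 - 1 - q2) = p2 - 1 by omega] at this
  -- step 3 : find some point at height p2 - 1 with x-coordinate ≤ p1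
  have s3 : ∀ x, (x, p2) ∈ S → ∃ x' ≤ x, (x', p2 - 1) ∈ S := by
    intro x
    induction x with
    | zero =>
      intro hx
      rcases hA1 0 p2 hx (by simp; omega) with ⟨h0, _⟩ | ⟨_, hm⟩
      · omega
      · exact ⟨0, le_rfl, hm⟩
    | succ k ih =>
      intro hx
      rcases hA1 (k + 1) p2 hx (by simp) with ⟨_, hm⟩ | ⟨_, hm⟩
      · simp only [Nat.add_sub_cancel] at hm
        obtain ⟨x', hle, hx'⟩ := ih hm
        exact ⟨x', by omega, hx'⟩
      · exact ⟨k + 1, le_rfl, hm⟩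
  obtain ⟨x0, hx0le, hx0⟩ := s3 p1 hpS
  -- step 4 : grow rightward at height p2 - 1
  have s4 : ∀ n, x0 + n ≤ q1 → (x0 + n, p2 - 1) ∈ S := by
    intro n
    induction n with
    | zero => intro _; simpa using hx0
    | succ k ih =>
      intro hk
      have hmem := ih (by omega)
      have := (hA2 q1 (p2 - 1) (x0 + k) (p2 - 1) s2' hmem (by omega)).2.2
        ⟨by omega, le_rfl⟩
      exact this
  have m1 : (p1, p2 - 1) ∈ S := by
    have := s4 (p1 - x0) (by omega)
    rwa [show x0 + (p1 - x0) = p1 by omega] at this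
  have m2 : (p1 + 1, p2 - 1) ∈ S := by
    have := s4 (p1 + 1 - x0) (by omega)
    rwa [show x0 + (p1 + 1 - x0) = p1 + 1 by omega] at this
  simp only at hpb
  rcases hpb with hc | (hc | hc) | (hc | hc)
  · exact hc s1
  · omega
  · exact hc m1
  · omega
  · exact hc m2

theorem lower_boundary_monotone (S : Set (ℕ × ℕ)) (h : IsAntimatroidal S)
    (p q : ℕ × ℕ) (hp : InLowerBoundary S p) (hq : InLowerBoundary S q) :
    (p.1 ≤ q.1 ∧ p.2 ≤ q.2) ∨ (q.1 ≤ p.1 ∧ q.2 ≤ p.2) := by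
  by_contra hcon
  push_neg at hcon
  rcases lt_or_ge p.1 q.1 with h1 | h1
  · exact key_incomp S h p q hp hq h1 (by omega)
  · exact key_incomp S h q p hq hp (by omega) (by omega)
end

section
/- Let S be an antimatroidal point set and B_lower its lower boundary. For every (x,y) ∈ B_lower: (i) if (x,z) ∈ S and (x,z) ∉ B_lower then z > y; (ii) if (z,y) ∈ S and (z,y) ∉ B_lower then z < x. -/
/-- Row step: from two points in one row, fill one to the right. -/
lemma row_step (S : Set (ℕ × ℕ)) (h : IsAntimatroidal S)
    {c d w : ℕ} (hc : (c, w) ∈ S) (hd : (d, w) ∈ S) (hdc : d < c) :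
    (d + 1, w) ∈ S := by
  obtain ⟨-, -, -, h2⟩ := h
  exact ((h2 c w d w hc hd (by omega)).2.2) ⟨by omega, le_refl _⟩

/-- Column step: a point `(x',w)` weakly right of and strictly below `(x,y)`
can be pushed up. -/
lemma col_step (S : Set (ℕ × ℕ)) (h : IsAntimatroidal S)
    {x y x' w : ℕ} (ha : (x, y) ∈ S) (hb : (x', w) ∈ S)
    (hx : x ≤ x') (hw : w < y) : (x', w + 1) ∈ S := by
  obtain ⟨-, -, -, h2⟩ := h
  exact ((h2 x y x' w ha hb (by omega)).2.1) ⟨hx, by omega⟩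

/-- Column reach: climb from `(x',w)` up to any height `v ≤ y`. -/
lemma col_reach (S : Set (ℕ × ℕ)) (h : IsAntimatroidal S)
    {x y x' w : ℕ} (ha : (x, y) ∈ S) (hb : (x', w) ∈ S)
    (hx : x ≤ x') : ∀ v, w ≤ v → v ≤ y → (x', v) ∈ S := by
  intro v
  induction v with
  | zero =>
    intro h1 _
    have : w = 0 := by omega
    simpa [← this] using hb
  | succ n ih =>
    intro h1 h2
    rcases Nat.lt_or_ge n w with hn | hn
    · have hw : w = n + 1 := by omega
      simpa [← hw] using hb
    · exact col_step S h ha (ih hn (by omega)) hx (by omega)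

/-- Min lemma: if `(x,y) ∈ S` and `(z,w) ∈ S` with `x ≤ z` and `w ≤ y`,
then `(x,w) ∈ S`. -/
lemma min_mem (S : Set (ℕ × ℕ)) (h : IsAntimatroidal S) :
    ∀ n x y z w, x + y ≤ n → (x, y) ∈ S → (z, w) ∈ S → x ≤ z → w ≤ y →
      (x, w) ∈ S := by
  intro n
  induction n with
  | zero =>
    intro x y z w hn ha _ _ hwy
    have hw : w = 0 := by omega
    have hy : y = 0 := by omega
    simpa [hw, hy] using ha
  | succ n ih =>
    intro x y z w hn ha hb hxz hwy
    rcases Nat.eq_or_lt_of_le hwy with hwy' | hwy'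
    · simpa [hwy'] using ha
    · have hy : 1 ≤ y := by omega
      rcases h.2.2.1 x y ha (by simp; omega) with ⟨hx1, hxm⟩ | ⟨_, hym⟩
      · have hxm' : (x - 1, w) ∈ S :=
          ih (x - 1) y z w (by omega) hxm hb (by omega) hwy
        have hstep := row_step S h hb hxm' (by omega)
        simpa [Nat.sub_add_cancel hx1] using hstep
      · exact ih x (y - 1) z w (by omega) hym hb hxz (by omega)

theorem lower_boundary_extremal (S : Set (ℕ × ℕ)) (h : IsAntimatroidal S)
    (x y : ℕ) (hxy : InLowerBoundary S (x, y)) :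
    (∀ z, (x, z) ∈ S → ¬ InLowerBoundary S (x, z) → y < z) ∧
    (∀ z, (z, y) ∈ S → ¬ InLowerBoundary S (z, y) → z < x) := by
  constructor
  · intro z hz hnb
    by_contra hle
    have hzy : z ≤ y := by omega
    rcases Nat.eq_or_lt_of_le hzy with heq | hlt
    · exact hnb (heq ▸ hxy)
    simp only [InLowerBoundary, not_and, not_or, not_not] at hnb
    obtain ⟨hR, ⟨hz0, hD⟩, ⟨-, hDR⟩⟩ := hnb hz
    have hy0 : y ≠ 0 := by omega
    have hS : (x, y) ∈ S := hxy.1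
    have hRy : (x + 1, y) ∈ S :=
      col_reach S h hS hR (by omega) y (by omega) le_rfl
    have hDy : (x, y - 1) ∈ S :=
      col_reach S h hS hD le_rfl (y - 1) (by omega) (by omega)
    have hDRy : (x + 1, y - 1) ∈ S :=
      col_reach S h hS hDR (by omega) (y - 1) (by omega) (by omega)
    rcases hxy.2 with h' | h' | h'
    · exact h' hRy
    · rcases h' with h' | h' <;> [exact hy0 h'; exact h' hDy]
    · rcases h' with h' | h' <;> [exact hy0 h'; exact h' hDRy]
  · intro z hz hnb
    by_contra hle
    have hxz : x ≤ z := by omega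
    rcases Nat.eq_or_lt_of_le hxz with heq | hlt
    · exact hnb (heq ▸ hxy)
    simp only [InLowerBoundary, not_and, not_or, not_not] at hnb
    obtain ⟨hR, ⟨hy0, hD⟩, ⟨-, hDR⟩⟩ := hnb hz
    have hS : (x, y) ∈ S := hxy.1
    have hRx : (x + 1, y) ∈ S := row_step S h hz hS hlt
    have hDx : (x, y - 1) ∈ S :=
      min_mem S h (x + y) x y z (y - 1) le_rfl hS hD hxz (by omega)
    have hDRx : (x + 1, y - 1) ∈ S := row_step S h hD hDx hlt
    rcases hxy.2 with h' | h' | h'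
    · exact h' hRx
    · rcases h' with h' | h' <;> [exact hy0 h'; exact h' hDx]
    · rcases h' with h' | h' <;> [exact hy0 h'; exact h' hDRx]
end

section
/- Let S ⊆ ℕ² be a finite orthogonally convex N₄-connected set that is bounded by two monotone increasing N₄-paths from (0,0) to (x_max,y_max) (i.e., S lies between, and contains, two such lattice paths sharing endpoints). Then S is an antimatroidal point set, i.e., S satisfies accessibility (A1) and the exchange property (A2). -/
/-- `f 0, f 1, ..., f k` is a monotone increasing `N₄`-path starting at `(0,0)`:
each point is obtained from the previous one by incrementing one coordinate. -/
def MonoPath (f : ℕ → ℕ × ℕ) (k : ℕ) : Prop :=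
  f 0 = (0, 0) ∧
  ∀ i < k, f (i + 1) = ((f i).1 + 1, (f i).2) ∨ f (i + 1) = ((f i).1, (f i).2 + 1)

/-- `S` is orthogonally convex: its intersection with every horizontal and
every vertical line is an interval. -/
def OrthoConvex (S : Set (ℕ × ℕ)) : Prop :=
  (∀ y x₁ x₂ x, (x₁, y) ∈ S → (x₂, y) ∈ S → x₁ ≤ x → x ≤ x₂ → (x, y) ∈ S) ∧
  (∀ x y₁ y₂ y, (x, y₁) ∈ S → (x, y₂) ∈ S → y₁ ≤ y → y ≤ y₂ → (x, y) ∈ S)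

/-- Any two points of `S` are joined by an `N₄`-path inside `S`. -/
def N4Connected (S : Set (ℕ × ℕ)) : Prop :=
  ∀ A ∈ S, ∀ B ∈ S, ∃ (n : ℕ) (f : ℕ → ℕ × ℕ), f 0 = A ∧ f n = B ∧
    (∀ i ≤ n, f i ∈ S) ∧ (∀ i < n, N4Step (f i) (f (i + 1)))

/-- `S` is bounded by two monotone increasing `N₄`-paths (a lower one and an
upper one) from `(0,0)` to `(xmax, ymax)`: both paths lie in `S`, share their
endpoints, and every point of `S` lies (columnwise) between them. -/
def BoundedByTwoMonotonePaths (S : Set (ℕ × ℕ)) : Prop :=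
  ∃ (xmax ymax kl ku : ℕ) (fl fu : ℕ → ℕ × ℕ),
    MonoPath fl kl ∧ MonoPath fu ku ∧
    fl kl = (xmax, ymax) ∧ fu ku = (xmax, ymax) ∧
    (∀ i ≤ kl, fl i ∈ S) ∧ (∀ i ≤ ku, fu i ∈ S) ∧
    (∀ p ∈ S, p.1 ≤ xmax ∧ p.2 ≤ ymax) ∧
    (∀ p ∈ S, (∃ i ≤ kl, (fl i).1 = p.1 ∧ (fl i).2 ≤ p.2) ∧
              (∃ j ≤ ku, (fu j).1 = p.1 ∧ p.2 ≤ (fu j).2))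

lemma monoPath_mono {f : ℕ → ℕ × ℕ} {k : ℕ} (hf : MonoPath f k) :
    ∀ i j, i ≤ j → j ≤ k → (f i).1 ≤ (f j).1 ∧ (f i).2 ≤ (f j).2 := by
  intro i j hij hjk
  induction j with
  | zero =>
    have : i = 0 := by omega
    subst this; exact ⟨le_rfl, le_rfl⟩
  | succ n ih =>
    rcases Nat.lt_or_ge i (n + 1) with h | h
    · have h1 := ih (by omega) (by omega)
      rcases hf.2 n (by omega) with h2 | h2 <;> rw [h2] <;> constructor <;> simp <;> omega
    · have : i = n + 1 := by omega
      subst this; exact ⟨le_rfl, le_rfl⟩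

lemma monoPath_reach {f : ℕ → ℕ × ℕ} {k : ℕ} (hf : MonoPath f k)
    {j₀ c : ℕ} (hj₀ : j₀ ≤ k) (h1 : (f j₀).1 ≤ c) (h2 : c ≤ (f k).1) :
    ∃ j, j₀ ≤ j ∧ j ≤ k ∧ (f j).1 = c ∧ (f j₀).2 ≤ (f j).2 := by
  classical
  set P : ℕ → Prop := fun j => j₀ ≤ j ∧ (f j).1 ≤ c with hP
  have hPj₀ : P j₀ := ⟨le_rfl, h1⟩
  set j := Nat.findGreatest P k with hj
  have hj0le : j₀ ≤ j := Nat.le_findGreatest hj₀ hPj₀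
  have hjk : j ≤ k := Nat.findGreatest_le k
  have hPj : P j := Nat.findGreatest_spec hj₀ hPj₀
  refine ⟨j, hj0le, hjk, ?_, (monoPath_mono hf j₀ j hj0le hjk).2⟩
  rcases eq_or_lt_of_le hPj.2 with he | hlt
  · exact he
  · exfalso
    have hjlt : j < k := by
      rcases eq_or_lt_of_le hjk with he | h
      · rw [he] at hlt; omega
      · exact h
    have hnext : P (j + 1) := by
      have hle : (f (j + 1)).1 ≤ c := by
        rcases hf.2 j hjlt with h3 | h3 <;> rw [h3] <;> dsimp only <;> omega
      exact ⟨by omega, hle⟩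
    have : j + 1 ≤ j := Nat.le_findGreatest (by omega) hnext
    omega

theorem geometric_implies_antimatroidal (S : Set (ℕ × ℕ))
    (hfin : S.Finite) (hconv : OrthoConvex S) (hconn : N4Connected S)
    (hbd : BoundedByTwoMonotonePaths S) :
    (∀ x y, (x, y) ∈ S → (x, y) ≠ (0, 0) →
      (1 ≤ x ∧ (x - 1, y) ∈ S) ∨ (1 ≤ y ∧ (x, y - 1) ∈ S)) ∧
    (∀ a₁ a₂ b₁ b₂, (a₁, a₂) ∈ S → (b₁, b₂) ∈ S → ¬(a₁ ≤ b₁ ∧ a₂ ≤ b₂) →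
      ((b₁ ≤ a₁ ∧ b₂ ≤ a₂) → ((b₁ + 1, b₂) ∈ S ∨ (b₁, b₂ + 1) ∈ S)) ∧
      ((a₁ ≤ b₁ ∧ b₂ ≤ a₂) → (b₁, b₂ + 1) ∈ S) ∧
      ((b₁ ≤ a₁ ∧ a₂ ≤ b₂) → (b₁ + 1, b₂) ∈ S)) := by
  classical
  obtain ⟨xmax, ymax, kl, ku, fl, fu, hfl, hfu, hflend, hfuend, hflS, hfuS, hbound, hwit⟩ := hbd
  obtain ⟨hconvH, hconvV⟩ := hconv
  have hfukux : (fu ku).1 = xmax := by rw [hfuend]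
  have hfukuy : (fu ku).2 = ymax := by rw [hfuend]
  constructor
  · -- Accessibility (A1)
    intro x y hxy hne
    obtain ⟨⟨i, hik, hix, hiy⟩, _⟩ := hwit (x, y) hxy
    rcases eq_or_lt_of_le hiy with heq | hlt
    · -- (x, y) lies on the lower path
      have hfi : fl i = (x, y) := by
        have := Prod.mk.eta (p := fl i)
        rw [← this, hix, heq]
      have hi0 : i ≠ 0 := by
        intro h
        rw [h, hfl.1] at hfi
        exact hne hfi.symm
      obtain ⟨m, rfl⟩ := Nat.exists_eq_succ_of_ne_zero hi0
      have hmS : fl m ∈ S := hflS m (by omega)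
      rcases hfl.2 m (by omega) with h | h
      · left
        rw [hfi] at h
        have hx1 : x = (fl m).1 + 1 := (Prod.mk.injEq _ _ _ _).mp h |>.1
        have hy1 : y = (fl m).2 := (Prod.mk.injEq _ _ _ _).mp h |>.2
        refine ⟨by omega, ?_⟩
        have : fl m = (x - 1, y) := by
          rw [← Prod.mk.eta (p := fl m)]
          rw [hy1]
          congr 1
          omega
        rwa [this] at hmS
      · right
        rw [hfi] at h
        have hx1 : x = (fl m).1 := (Prod.mk.injEq _ _ _ _).mp h |>.1
        have hy1 : y = (fl m).2 + 1 := (Prod.mk.injEq _ _ _ _).mp h |>.2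
        refine ⟨by omega, ?_⟩
        have : fl m = (x, y - 1) := by
          rw [← Prod.mk.eta (p := fl m), ← hx1]
          congr 1
          omega
        rwa [this] at hmS
    · -- strictly above the lower path in its column
      right
      refine ⟨by omega, ?_⟩
      have hilS : (x, (fl i).2) ∈ S := by
        have := hflS i hik
        rwa [← Prod.mk.eta (p := fl i), hix] at this
      exact hconvV x (fl i).2 y (y - 1) hilS hxy (by omega) (by omega)
  · -- Exchange property (A2)
    intro a₁ a₂ b₁ b₂ ha hb hnd
    have hax : a₁ ≤ xmax := (hbound _ ha).1
    have hbx : b₁ ≤ xmax := (hbound _ hb).1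
    have hay : a₂ ≤ ymax := (hbound _ ha).2
    have hby : b₂ ≤ ymax := (hbound _ hb).2
    obtain ⟨-, ja, hjaku, hjax, hjay⟩ := hwit (a₁, a₂) ha
    obtain ⟨-, jb, hjbku, hjbx, hjby⟩ := hwit (b₁, b₂) hb
    dsimp only at hjax hjay hjbx hjby
    refine ⟨?_, ?_, ?_⟩
    · -- b ≤ a componentwise, strict somewhere
      rintro ⟨h1, h2⟩
      set P : ℕ → Prop := fun j => (fu j).1 = b₁ with hP
      have hPjb : P jb := hjbx
      set js := Nat.findGreatest P ku with hjs
      have hjsge : jb ≤ js := Nat.le_findGreatest hjbku hPjb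
      have hjsku : js ≤ ku := Nat.findGreatest_le ku
      have hPjs : P js := Nat.findGreatest_spec hjbku hPjb
      have hjsy : b₂ ≤ (fu js).2 :=
        le_trans hjby (monoPath_mono hfu jb js hjsge hjsku).2
      rcases eq_or_lt_of_le hjsy with heq | hlt
      · -- the top of column b₁ on the upper path is exactly b₂
        have hjsfu : fu js = (b₁, b₂) := by
          rw [← Prod.mk.eta (p := fu js), hPjs, ← heq]
        have hjslt : js < ku := by
          rcases eq_or_lt_of_le hjsku with he | h
          · exfalso
            rw [he, hfuend] at hjsfu
            have hx : xmax = b₁ := (Prod.mk.injEq _ _ _ _).mp hjsfu |>.1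
            have hy : ymax = b₂ := (Prod.mk.injEq _ _ _ _).mp hjsfu |>.2
            exact hnd ⟨by omega, by omega⟩
          · exact h
        rcases hfu.2 js hjslt with hstep | hstep
        · left
          have : fu (js + 1) = (b₁ + 1, b₂) := by
            rw [hstep, hjsfu]
          have := hfuS (js + 1) (by omega)
          rwa [‹fu (js + 1) = (b₁ + 1, b₂)›] at this
        · exfalso
          have hPnext : P (js + 1) := by
            show (fu (js + 1)).1 = b₁
            rw [hstep]
            exact hPjs
          have : js + 1 ≤ js := Nat.le_findGreatest (by omega) hPnext
          omega
      · -- there is room above b in its column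
        right
        have hjsS : (b₁, (fu js).2) ∈ S := by
          have := hfuS js hjsku
          rwa [← Prod.mk.eta (p := fu js), hPjs] at this
        exact hconvV b₁ b₂ (fu js).2 (b₂ + 1) hb hjsS (by omega) (by omega)
    · -- a₁ ≤ b₁ and b₂ ≤ a₂ (hence b₂ < a₂)
      rintro ⟨h1, h2⟩
      have hlt : b₂ < a₂ := by omega
      obtain ⟨j, hjaj, hjku, hjx, hjy⟩ :=
        monoPath_reach hfu (c := b₁) hjaku (by rw [hjax]; exact h1) (by rw [hfukux]; exact hbx)
      have hjS : (b₁, (fu j).2) ∈ S := by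
        have := hfuS j hjku
        rwa [← Prod.mk.eta (p := fu j), hjx] at this
      exact hconvV b₁ b₂ (fu j).2 (b₂ + 1) hb hjS (by omega) (by omega)
    · -- b₁ ≤ a₁ and a₂ ≤ b₂ (hence b₁ < a₁)
      rintro ⟨h1, h2⟩
      have hlt : b₁ < a₁ := by omega
      obtain ⟨j, hjbj, hjku, hjx, hjy⟩ :=
        monoPath_reach hfu (c := a₁) hjbku (by rw [hjbx]; exact h1) (by rw [hfukux]; exact hax)
      have hjS : (a₁, (fu j).2) ∈ S := by
        have := hfuS j hjku
        rwa [← Prod.mk.eta (p := fu j), hjx] at this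
      have hcol : (a₁, b₂) ∈ S := hconvV a₁ a₂ (fu j).2 b₂ ha hjS h2 (by omega)
      exact hconvH b₂ b₁ a₁ (b₁ + 1) hb hcol (by omega) (by omega)
end

section
/- A set S of points in ℕ² is an antimatroidal point set if and only if S is a finite orthogonally convex N₄-connected set bounded by two monotone increasing N₄-paths between (0,0) and (x_max,y_max). -/
section PathLemmas

variable {f : ℕ → ℕ × ℕ} {k : ℕ}

def PSteps (f : ℕ → ℕ × ℕ) (k : ℕ) : Prop :=
  ∀ i < k, f (i + 1) = ((f i).1 + 1, (f i).2) ∨ f (i + 1) = ((f i).1, (f i).2 + 1)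

theorem path_mono (h : PSteps f k) {i j : ℕ} (hij : i ≤ j) (hj : j ≤ k) :
    (f i).1 ≤ (f j).1 ∧ (f i).2 ≤ (f j).2 := by
  induction j with
  | zero =>
    have : i = 0 := by omega
    subst this; exact ⟨le_refl _, le_refl _⟩
  | succ j ih =>
    rcases Nat.lt_or_ge i (j+1) with hlt | hge
    · have hj' : j ≤ k := by omega
      have := ih (by omega) hj'
      rcases h j (by omega) with hs | hs <;> rw [hs] <;> simp <;> omega
    · have : i = j + 1 := by omega
      subst this; exact ⟨le_refl _, le_refl _⟩

theorem path_ivt (h : PSteps f k) {i x : ℕ} (hik : i ≤ k) (h1 : (f i).1 ≤ x)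
    (h2 : x ≤ (f k).1) : ∃ j, i ≤ j ∧ j ≤ k ∧ (f j).1 = x := by
  induction k with
  | zero =>
    have : i = 0 := by omega
    subst this; exact ⟨0, le_refl _, le_refl _, by omega⟩
  | succ k ih =>
    have h' : PSteps f k := fun i hi => h i (by omega)
    rcases le_or_gt x (f k).1 with hx | hx
    · rcases le_or_gt i k with hik' | hik'
      · obtain ⟨j, h3, h4, h5⟩ := ih h' hik' hx
        exact ⟨j, h3, by omega, h5⟩
      · have : i = k + 1 := by omega
        subst this
        exact ⟨k+1, le_refl _, le_refl _, by omega⟩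
    · rcases h k (by omega) with hs | hs
      · refine ⟨k+1, by omega, le_refl _, ?_⟩
        rw [hs] at h2 ⊢; simp at h2 ⊢; omega
      · exfalso; rw [hs] at h2; simp at h2; omega

theorem path_cross (h : PSteps f k) :
    ∀ n i, k - i ≤ n → i ≤ k → (f i).1 < (f k).1 →
    ∃ j, i ≤ j ∧ j < k ∧ (f j).1 = (f i).1 ∧ f (j+1) = ((f j).1 + 1, (f j).2) := by
  intro n
  induction n with
  | zero => intro i h1 h2 h3; have : i = k := by omega
            subst this; omega
  | succ n ih =>
    intro i h1 h2 h3
    have hik : i < k := by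
      rcases Nat.lt_or_ge i k with _ | _
      · assumption
      · have : i = k := by omega
        subst this; omega
    rcases h i hik with hs | hs
    · exact ⟨i, le_refl _, hik, rfl, hs⟩
    · have hfst : (f (i+1)).1 = (f i).1 := by rw [hs]
      obtain ⟨j, h4, h5, h6, h7⟩ := ih (i+1) (by omega) (by omega) (by omega)
      exact ⟨j, by omega, h5, by omega, h7⟩

end PathLemmas

theorem backward_dir (S : Set (ℕ × ℕ)) (hfin : S.Finite) (hoc : OrthoConvex S)
    (hb : BoundedByTwoMonotonePaths S) : IsAntimatroidal S := by
  obtain ⟨xmax, ymax, kl, ku, fl, fu, hMl, hMu, hendl, hendu, hmeml, hmemu, hbound, hcols⟩ := hb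
  obtain ⟨oh, ov⟩ := hoc
  have hsl : PSteps fl kl := hMl.2
  have hsu : PSteps fu ku := hMu.2
  refine ⟨hfin, ⟨(0,0), by rw [← hMl.1]; exact hmeml 0 (Nat.zero_le _)⟩, ?_, ?_⟩
  · -- A1
    intro x y hxy hne0
    obtain ⟨⟨i, hik, hfx, hfy⟩, -⟩ := hcols (x, y) hxy
    rcases lt_or_eq_of_le hfy with hlt | heq
    · refine Or.inr ⟨by omega, ?_⟩
      have hmem : ((x : ℕ), (fl i).2) ∈ S := by
        have : fl i = (x, (fl i).2) := by
          apply Prod.ext <;> simp [hfx]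
        rw [← this]; exact hmeml i hik
      exact ov x (fl i).2 y (y-1) hmem hxy (by omega) (by omega)
    · -- fl i = (x, y)
      have hfi : fl i = (x, y) := by
        apply Prod.ext <;> simp [hfx, heq]
      have hi0 : i ≠ 0 := by
        intro h0; rw [h0, hMl.1] at hfi
        exact hne0 hfi.symm
      obtain ⟨j, rfl⟩ : ∃ j, i = j + 1 := ⟨i - 1, by omega⟩
      have hjS : fl j ∈ S := hmeml j (by omega)
      rcases hsl j (by omega) with hs | hs
      · rw [hfi] at hs
        have h1 : x = (fl j).1 + 1 := by
          have := congrArg Prod.fst hs; simpa using this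
        have h2 : y = (fl j).2 := by
          have := congrArg Prod.snd hs; simpa using this
        refine Or.inl ⟨by omega, ?_⟩
        have : fl j = (x - 1, y) := by
          apply Prod.ext <;> simp <;> omega
        rwa [← this]
      · rw [hfi] at hs
        have h1 : x = (fl j).1 := by
          have := congrArg Prod.fst hs; simpa using this
        have h2 : y = (fl j).2 + 1 := by
          have := congrArg Prod.snd hs; simpa using this
        refine Or.inr ⟨by omega, ?_⟩
        have : fl j = (x, y - 1) := by
          apply Prod.ext <;> simp <;> omega
        rwa [← this]
  · -- A2
    intro a₁ a₂ b₁ b₂ ha hb hnab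
    have hxmaxl : (fl kl).1 = xmax := by rw [hendl]
    have hxmaxu : (fu ku).1 = xmax := by rw [hendu]
    refine ⟨?_, ?_, ?_⟩
    · rintro ⟨h1, h2⟩
      obtain ⟨-, ⟨j, hjk, hjx, hjy⟩⟩ := hcols (b₁, b₂) hb
      replace hjx : (fu j).1 = b₁ := hjx
      replace hjy : b₂ ≤ (fu j).2 := hjy
      rcases lt_or_eq_of_le hjy with hlt | heq
      · refine Or.inr ?_
        have hmem : ((b₁ : ℕ), (fu j).2) ∈ S := by
          have : fu j = (b₁, (fu j).2) := by apply Prod.ext <;> simp [hjx]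
          rw [← this]; exact hmemu j hjk
        exact ov b₁ b₂ (fu j).2 (b₂+1) hb hmem (by omega) (by omega)
      · have hfj : fu j = (b₁, b₂) := by apply Prod.ext <;> simp [hjx, ← heq]
        have hjku : j < ku := by
          rcases lt_or_eq_of_le hjk with h | h
          · exact h
          · exfalso
            rw [h, hendu] at hfj
            have e1 : xmax = b₁ := congrArg Prod.fst hfj
            have e2 : ymax = b₂ := congrArg Prod.snd hfj
            obtain ⟨hba1, hba2⟩ := hbound (a₁, a₂) ha
            replace hba1 : a₁ ≤ xmax := hba1
            replace hba2 : a₂ ≤ ymax := hba2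
            exact hnab ⟨by omega, by omega⟩
        have hnext : fu (j+1) ∈ S := hmemu (j+1) (by omega)
        rcases hsu j hjku with hs | hs
        · refine Or.inl ?_
          rw [hfj] at hs; rw [hs] at hnext; exact hnext
        · refine Or.inr ?_
          rw [hfj] at hs; rw [hs] at hnext; exact hnext
    · rintro ⟨h1, h2⟩
      have hb2 : b₂ < a₂ := by
        rcases Nat.lt_or_ge b₂ a₂ with h | h
        · exact h
        · exact absurd ⟨h1, h⟩ hnab
      obtain ⟨-, ⟨j', hj'k, hj'x, hj'y⟩⟩ := hcols (a₁, a₂) ha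
      replace hj'x : (fu j').1 = a₁ := hj'x
      replace hj'y : a₂ ≤ (fu j').2 := hj'y
      have hb1max : b₁ ≤ xmax := (hbound (b₁, b₂) hb).1
      obtain ⟨j, hjj', hjku, hjx⟩ := path_ivt hsu (x := b₁) hj'k (by omega) (by omega)
      have hy : (fu j').2 ≤ (fu j).2 := (path_mono hsu hjj' hjku).2
      have hmem : ((b₁ : ℕ), (fu j).2) ∈ S := by
        have : fu j = (b₁, (fu j).2) := by apply Prod.ext <;> simp [hjx]
        rw [← this]; exact hmemu j hjku
      exact ov b₁ b₂ (fu j).2 (b₂+1) hb hmem (by omega) (by omega)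
    · rintro ⟨h1, h2⟩
      have hb1 : b₁ < a₁ := by
        rcases Nat.lt_or_ge b₁ a₁ with h | h
        · exact h
        · exact absurd ⟨h, h2⟩ hnab
      -- low point in column b₁+1
      obtain ⟨⟨i', hi'k, hi'x, hi'y⟩, -⟩ := hcols (a₁, a₂) ha
      replace hi'x : (fl i').1 = a₁ := hi'x
      replace hi'y : (fl i').2 ≤ a₂ := hi'y
      have h0 : (fl 0).1 = 0 := by rw [hMl.1]
      have hsl' : PSteps fl i' := fun t ht => hsl t (by omega)
      obtain ⟨i, -, hii', hix⟩ := path_ivt hsl' (x := b₁+1) (Nat.zero_le i') (by omega) (by omega)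
      have hylo : (fl i).2 ≤ (fl i').2 := (path_mono hsl' hii' (le_refl i')).2
      have hlo : ((b₁+1 : ℕ), (fl i).2) ∈ S := by
        have : fl i = (b₁+1, (fl i).2) := by apply Prod.ext <;> simp [hix]
        rw [← this]; exact hmeml i (by omega)
      -- high point in column b₁+1
      obtain ⟨-, ⟨j₀, hj₀k, hj₀x, hj₀y⟩⟩ := hcols (b₁, b₂) hb
      replace hj₀x : (fu j₀).1 = b₁ := hj₀x
      replace hj₀y : b₂ ≤ (fu j₀).2 := hj₀y
      have ha1max : a₁ ≤ xmax := (hbound (a₁, a₂) ha).1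
      obtain ⟨j, hj₀j, hjku, hjx', hjstep⟩ :=
        path_cross hsu (ku - j₀) j₀ (le_refl _) (by omega) (by omega)
      have hyhi : (fu j₀).2 ≤ (fu j).2 := (path_mono hsu hj₀j (le_of_lt hjku)).2
      have hhi : ((b₁+1 : ℕ), (fu j).2) ∈ S := by
        have : fu (j+1) = (b₁+1, (fu j).2) := by rw [hjstep, hjx', hj₀x]
        rw [← this]; exact hmemu (j+1) (by omega)
      exact ov (b₁+1) (fl i).2 (fu j).2 b₂ hlo hhi (by omega) (by omega)


theorem n4_fwd {p q : ℕ × ℕ} (h : q = (p.1+1, p.2) ∨ q = (p.1, p.2+1)) :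
    N4Step p q ∧ N4Step q p := by
  rcases h with h | h <;> subst h <;> exact ⟨by simp [N4Step], by simp [N4Step]⟩

def lowStep (m : ℕ → ℕ) (xmax : ℕ) (p : ℕ × ℕ) : ℕ × ℕ :=
  if p.1 < xmax then
    (if p.2 < m (p.1 + 1) then (p.1, p.2 + 1) else (p.1 + 1, p.2))
  else (p.1, p.2 + 1)

def lowPath (m : ℕ → ℕ) (xmax : ℕ) : ℕ → ℕ × ℕ
  | 0 => (0, 0)
  | i + 1 => lowStep m xmax (lowPath m xmax i)

theorem lowStep_cases (m : ℕ → ℕ) (xmax : ℕ) (p : ℕ × ℕ) :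
    lowStep m xmax p = (p.1 + 1, p.2) ∨ lowStep m xmax p = (p.1, p.2 + 1) := by
  unfold lowStep; split_ifs <;> simp

def upStep (M : ℕ → ℕ) (p : ℕ × ℕ) : ℕ × ℕ :=
  if p.2 < M p.1 then (p.1, p.2 + 1) else (p.1 + 1, p.2)

def upPath (M : ℕ → ℕ) : ℕ → ℕ × ℕ
  | 0 => (0, 0)
  | i + 1 => upStep M (upPath M i)

theorem upStep_cases (M : ℕ → ℕ) (p : ℕ × ℕ) :
    upStep M p = (p.1 + 1, p.2) ∨ upStep M p = (p.1, p.2 + 1) := by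
  unfold upStep; split_ifs <;> simp

theorem n4_join {S : Set (ℕ × ℕ)} {fA fB : ℕ → ℕ × ℕ} {nA nB : ℕ}
    (hA0 : fA 0 = (0,0)) (hB0 : fB 0 = (0,0))
    (hAmem : ∀ i ≤ nA, fA i ∈ S) (hBmem : ∀ i ≤ nB, fB i ∈ S)
    (hAs : PSteps fA nA) (hBs : PSteps fB nB) :
    ∃ (n : ℕ) (h : ℕ → ℕ × ℕ), h 0 = fA nA ∧ h n = fB nB ∧
      (∀ i ≤ n, h i ∈ S) ∧ (∀ i < n, N4Step (h i) (h (i + 1))) := by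
  refine ⟨nA + nB, fun i => if i ≤ nA then fA (nA - i) else fB (i - nA), ?_, ?_, ?_, ?_⟩
  · simp
  · dsimp only
    rcases Nat.eq_zero_or_pos nB with h0 | hpos
    · subst h0
      simp only [Nat.add_zero, le_refl, if_pos, Nat.sub_self]
      rw [hA0, hB0]
    · rw [if_neg (by omega)]
      congr 1; omega
  · intro i hi
    dsimp only
    split_ifs with h
    · exact hAmem _ (by omega)
    · exact hBmem _ (by omega)
  · intro i hi
    dsimp only
    rcases le_or_gt (i + 1) nA with h1 | h1
    · rw [if_pos (by omega), if_pos h1]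
      have e : nA - i = (nA - (i + 1)) + 1 := by omega
      rw [e]
      exact (n4_fwd (hAs (nA - (i+1)) (by omega))).2
    · rcases le_or_gt i nA with h2 | h2
      · rw [if_pos h2, if_neg (by omega)]
        have e1 : nA - i = 0 := by omega
        have e2 : i + 1 - nA = 1 := by omega
        rw [e1, e2, hA0, ← hB0]
        exact (n4_fwd (hBs 0 (by omega))).1
      · rw [if_neg (by omega), if_neg (by omega)]
        have e : i + 1 - nA = (i - nA) + 1 := by omega
        rw [e]
        exact (n4_fwd (hBs (i - nA) (by omega))).1

theorem fwd_main {S : Set (ℕ × ℕ)} (hfin : S.Finite) (hne : S.Nonempty)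
    (A1 : ∀ x y, (x, y) ∈ S → (x, y) ≠ (0, 0) →
      (1 ≤ x ∧ (x - 1, y) ∈ S) ∨ (1 ≤ y ∧ (x, y - 1) ∈ S))
    (A2 : ∀ a₁ a₂ b₁ b₂, (a₁, a₂) ∈ S → (b₁, b₂) ∈ S → ¬(a₁ ≤ b₁ ∧ a₂ ≤ b₂) →
      ((b₁ ≤ a₁ ∧ b₂ ≤ a₂) → ((b₁ + 1, b₂) ∈ S ∨ (b₁, b₂ + 1) ∈ S)) ∧
      ((a₁ ≤ b₁ ∧ b₂ ≤ a₂) → (b₁, b₂ + 1) ∈ S) ∧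
      ((b₁ ≤ a₁ ∧ a₂ ≤ b₂) → (b₁ + 1, b₂) ∈ S)) :
    OrthoConvex S ∧ N4Connected S ∧ BoundedByTwoMonotonePaths S := by
  -- paths from the origin to any point
  have pathto : ∀ n, ∀ p ∈ S, p.1 + p.2 = n →
      ∃ f : ℕ → ℕ × ℕ, f 0 = (0,0) ∧ f n = p ∧ (∀ i ≤ n, f i ∈ S) ∧ PSteps f n := by
    intro n
    induction n with
    | zero =>
      rintro ⟨x, y⟩ hp hsum
      simp only at hsum
      refine ⟨fun _ => (0,0), rfl, ?_, ?_, ?_⟩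
      · apply Prod.ext <;> simp <;> omega
      · intro i hi
        have : ((0:ℕ),(0:ℕ)) = (x, y) := by apply Prod.ext <;> simp <;> omega
        rw [this]; exact hp
      · intro i hi; omega
    | succ n ih =>
      rintro ⟨x, y⟩ hp hsum
      simp only at hsum
      have hne0 : ((x:ℕ), (y:ℕ)) ≠ (0, 0) := by
        intro h
        have h1 : x = 0 := congrArg Prod.fst h
        have h2 : y = 0 := congrArg Prod.snd h
        omega
      have key : ∀ q : ℕ × ℕ, q ∈ S → q.1 + q.2 = n →
          ((x, y) = (q.1 + 1, q.2) ∨ (x, y) = (q.1, q.2 + 1)) →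
          ∃ f : ℕ → ℕ × ℕ, f 0 = (0,0) ∧ f (n+1) = (x, y) ∧
            (∀ i ≤ n+1, f i ∈ S) ∧ PSteps f (n+1) := by
        intro q hq hqsum hstep
        obtain ⟨g, hg0, hgn, hgmem, hgs⟩ := ih q hq hqsum
        refine ⟨fun i => if i ≤ n then g i else (x, y), ?_, ?_, ?_, ?_⟩
        · simp only [Nat.zero_le, if_pos]; exact hg0
        · dsimp only
          rw [if_neg (show ¬ n + 1 ≤ n by omega)]
        · intro i hi
          dsimp only
          split_ifs with h
          · exact hgmem i h
          · exact hp
        · intro i hi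
          dsimp only
          rcases Nat.lt_or_ge i n with hlt | hge
          · rw [if_pos (show i + 1 ≤ n by omega), if_pos (show i ≤ n by omega)]
            exact hgs i hlt
          · have hin : i = n := by omega
            subst hin
            rw [if_neg (show ¬ i + 1 ≤ i by omega), if_pos (le_refl i), hgn]
            exact hstep
      rcases A1 x y hp hne0 with ⟨h1, hq⟩ | ⟨h1, hq⟩
      · refine key (x - 1, y) hq (by simp; omega) (Or.inl ?_)
        apply Prod.ext <;> simp <;> omega
      · refine key (x, y - 1) hq (by simp; omega) (Or.inr ?_)
        apply Prod.ext <;> simp <;> omega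
  have horigin : (0, 0) ∈ S := by
    obtain ⟨p, hp⟩ := hne
    obtain ⟨f, hf0, -, hfmem, -⟩ := pathto (p.1 + p.2) p hp rfl
    rw [← hf0]; exact hfmem 0 (Nat.zero_le _)
  -- orthogonal convexity
  have oh : ∀ y x₁ x₂ x, (x₁, y) ∈ S → (x₂, y) ∈ S → x₁ ≤ x → x ≤ x₂ → (x, y) ∈ S := by
    intro y x₁ x₂ x h1 h2 hx1 hx2
    have key : ∀ t, x₁ + t ≤ x₂ → (x₁ + t, y) ∈ S := by
      intro t
      induction t with
      | zero => intro _; exact h1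
      | succ t iht =>
        intro h
        have hm := iht (by omega)
        exact (A2 x₂ y (x₁ + t) y h2 hm (by omega)).2.2 ⟨by omega, le_refl y⟩
    have e : x₁ + (x - x₁) = x := by omega
    have := key (x - x₁) (by omega)
    rwa [e] at this
  have ov : ∀ x y₁ y₂ y, (x, y₁) ∈ S → (x, y₂) ∈ S → y₁ ≤ y → y ≤ y₂ → (x, y) ∈ S := by
    intro x y₁ y₂ y h1 h2 hy1 hy2
    have key : ∀ t, y₁ + t ≤ y₂ → (x, y₁ + t) ∈ S := by
      intro t
      induction t with
      | zero => intro _; exact h1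
      | succ t iht =>
        intro h
        have hm := iht (by omega)
        exact (A2 x y₂ x (y₁ + t) h2 hm (by omega)).2.1 ⟨le_refl x, by omega⟩
    have e : y₁ + (y - y₁) = y := by omega
    have := key (y - y₁) (by omega)
    rwa [e] at this
  -- maxima
  have hSfne : hfin.toFinset.Nonempty := by rwa [Set.Finite.toFinset_nonempty]
  set xmax := (hfin.toFinset.image Prod.fst).max' (hSfne.image _) with hxmax_def
  set ymax := (hfin.toFinset.image Prod.snd).max' (hSfne.image _) with hymax_def
  have hxmax_le : ∀ p ∈ S, p.1 ≤ xmax := by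
    intro p hp
    exact Finset.le_max' _ _ (Finset.mem_image_of_mem _ (hfin.mem_toFinset.2 hp))
  have hymax_le : ∀ p ∈ S, p.2 ≤ ymax := by
    intro p hp
    exact Finset.le_max' _ _ (Finset.mem_image_of_mem _ (hfin.mem_toFinset.2 hp))
  obtain ⟨pw, hpwS, hpwx⟩ : ∃ p ∈ S, p.1 = xmax := by
    have := (hfin.toFinset.image Prod.fst).max'_mem (hSfne.image _)
    rw [Finset.mem_image] at this
    obtain ⟨p, hp, he⟩ := this
    exact ⟨p, hfin.mem_toFinset.1 hp, he⟩
  obtain ⟨qw, hqwS, hqwy⟩ : ∃ p ∈ S, p.2 = ymax := by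
    have := (hfin.toFinset.image Prod.snd).max'_mem (hSfne.image _)
    rw [Finset.mem_image] at this
    obtain ⟨p, hp, he⟩ := this
    exact ⟨p, hfin.mem_toFinset.1 hp, he⟩
  -- every column up to xmax is nonempty
  have colne_aux : ∀ n, ∀ p ∈ S, p.1 + p.2 = n → ∀ x ≤ p.1, ∃ y, (x, y) ∈ S := by
    intro n
    induction n with
    | zero =>
      rintro ⟨a, b⟩ hp hsum x hx
      simp only at hsum hx
      have hx0 : x = 0 := by omega
      have hb0 : b = 0 := by omega
      have ha0 : a = 0 := by omega
      subst hx0; subst hb0; subst ha0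
      exact ⟨0, hp⟩
    | succ n ih =>
      rintro ⟨a, b⟩ hp hsum x hx
      simp only at hsum hx
      rcases Nat.lt_or_ge x a with hxa | hxa
      · have hne0 : ((a:ℕ), (b:ℕ)) ≠ (0, 0) := by
          intro h
          have h1 : a = 0 := congrArg Prod.fst h
          omega
        rcases A1 a b hp hne0 with ⟨h1, hq⟩ | ⟨h1, hq⟩
        · exact ih (a - 1, b) hq (by simp; omega) x (by simp; omega)
        · exact ih (a, b - 1) hq (by simp; omega) x (by simp; omega)
      · have : x = a := by omega
        subst this
        exact ⟨b, hp⟩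
  have colne : ∀ x ≤ xmax, ∃ y, (x, y) ∈ S :=
    fun x hx => colne_aux (pw.1 + pw.2) pw hpwS rfl x (by omega)
  -- the corner point
  have hcorner : (xmax, ymax) ∈ S := by
    have hqw : ((qw.1 : ℕ), ymax) ∈ S := by
      have : ((qw.1 : ℕ), ymax) = qw := by apply Prod.ext <;> simp [hqwy]
      rw [this]; exact hqwS
    have hpw : ((xmax : ℕ), pw.2) ∈ S := by
      have : ((xmax : ℕ), pw.2) = pw := by apply Prod.ext <;> simp [hpwx]
      rw [this]; exact hpwS
    have climb : ∀ t, qw.1 + t ≤ xmax → (qw.1 + t, ymax) ∈ S := by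
      intro t
      induction t with
      | zero => intro _; exact hqw
      | succ t iht =>
        intro h
        have hm := iht (by omega)
        exact (A2 xmax pw.2 (qw.1 + t) ymax hpw hm (by omega)).2.2
          ⟨by omega, hymax_le pw hpwS⟩
    have := climb (xmax - qw.1) (by have := hxmax_le qw hqwS; omega)
    have e : qw.1 + (xmax - qw.1) = xmax := by have := hxmax_le qw hqwS; omega
    rwa [e] at this
  -- column minima and maxima
  set m : ℕ → ℕ := fun x => sInf {y | (x, y) ∈ S} with hm_def
  set M : ℕ → ℕ := fun x => sSup {y | (x, y) ∈ S} with hM_def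
  have hm_mem : ∀ x ≤ xmax, (x, m x) ∈ S := fun x hx => Nat.sInf_mem (colne x hx)
  have hm_le : ∀ x y, (x, y) ∈ S → m x ≤ y := fun x y h => Nat.sInf_le h
  have hbdd : ∀ x, BddAbove {y | (x, y) ∈ S} :=
    fun x => ⟨ymax, fun y hy => hymax_le (x, y) hy⟩
  have hM_mem : ∀ x ≤ xmax, (x, M x) ∈ S := by
    intro x hx
    exact Nat.sSup_mem (colne x hx) (hbdd x)
  have hM_ge : ∀ x y, (x, y) ∈ S → y ≤ M x := fun x y h => le_csSup (hbdd x) h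
  have hm0 : m 0 = 0 := Nat.le_antisymm (hm_le 0 0 horigin) (Nat.zero_le _)
  have hm_step : ∀ x, x + 1 ≤ xmax → m x ≤ m (x + 1) ∧ (x, m (x + 1)) ∈ S := by
    intro x hx
    have hmem := hm_mem (x+1) hx
    rcases A1 (x+1) (m (x+1)) hmem (by simp) with ⟨h1, hq⟩ | ⟨h1, hq⟩
    · simp only [Nat.add_sub_cancel] at hq
      exact ⟨hm_le x _ hq, hq⟩
    · exfalso
      have := hm_le (x+1) _ hq
      omega
  have hm_mono : ∀ x x', x ≤ x' → x' ≤ xmax → m x ≤ m x' := by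
    intro x x' hxx
    induction hxx with
    | refl => intro _; exact le_refl _
    | @step x' h ih =>
      intro hx'
      exact le_trans (ih (by omega)) (hm_step x' (by omega)).1
  have hM_step : ∀ x, x + 1 ≤ xmax → M x ≤ M (x + 1) := by
    intro x hx
    by_contra hlt
    push_neg at hlt
    have h2 := (A2 x (M x) (x+1) (M (x+1)) (hM_mem x (by omega)) (hM_mem (x+1) hx)
      (by omega)).2.1 ⟨by omega, by omega⟩
    have := hM_ge (x+1) _ h2
    omega
  have hM_mono : ∀ x x', x ≤ x' → x' ≤ xmax → M x ≤ M x' := by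
    intro x x' hxx
    induction hxx with
    | refl => intro _; exact le_refl _
    | @step x' h ih =>
      intro hx'
      exact le_trans (ih (by omega)) (hM_step x' (by omega))
  have hM_bridge : ∀ x, x + 1 ≤ xmax → (x + 1, M x) ∈ S := by
    intro x hx
    rcases le_or_gt (m (x+1)) (M x) with h | h
    · exact ov (x+1) (m (x+1)) (M (x+1)) (M x) (hm_mem _ hx) (hM_mem _ hx) h (hM_step x hx)
    · rcases (A2 (x+1) (m (x+1)) x (M x) (hm_mem _ hx) (hM_mem x (by omega))
        (by omega)).1 ⟨by omega, by omega⟩ with h' | h'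
      · exact h'
      · exfalso
        have := hM_ge x _ h'
        omega
  have hMxmax : M xmax = ymax :=
    Nat.le_antisymm (hymax_le (xmax, M xmax) (hM_mem xmax (le_refl _)))
      (hM_ge xmax ymax hcorner)
  have hm_le_ymax : ∀ x ≤ xmax, m x ≤ ymax := fun x hx => hymax_le (x, m x) (hm_mem x hx)
  have hM_le_ymax : ∀ x ≤ xmax, M x ≤ ymax := fun x hx => hymax_le (x, M x) (hM_mem x hx)
  set N := xmax + ymax with hN_def
  -- ===== lower path =====
  set fl := lowPath m xmax with hfl_def
  have hfl0 : fl 0 = (0, 0) := rfl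
  have hflstep : ∀ i, fl (i + 1) = lowStep m xmax (fl i) := fun i => rfl
  have Il : ∀ i, i ≤ N → (fl i).1 + (fl i).2 = i ∧ (fl i).1 ≤ xmax ∧
      m (fl i).1 ≤ (fl i).2 ∧ ((fl i).1 < xmax → (fl i).2 ≤ m ((fl i).1 + 1)) ∧
      (fl i).2 ≤ ymax ∧ fl i ∈ S := by
    intro i
    induction i with
    | zero =>
      intro _
      rw [hfl0]
      exact ⟨rfl, Nat.zero_le _, by simp [hm0], fun _ => Nat.zero_le _, Nat.zero_le _, horigin⟩
    | succ i ih =>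
      intro h
      obtain ⟨hsum, hx, hylo, hyhi, hyax, hmem⟩ := ih (by omega)
      by_cases hx1 : (fl i).1 < xmax
      · by_cases hy1 : (fl i).2 < m ((fl i).1 + 1)
        · have e : fl (i+1) = ((fl i).1, (fl i).2 + 1) := by
            rw [hflstep i]; unfold lowStep; rw [if_pos hx1, if_pos hy1]
          rw [e]
          refine ⟨by simp; omega, by simp; omega, by simp; omega, ?_, ?_, ?_⟩
          · intro _; simp; omega
          · have := hm_le_ymax ((fl i).1 + 1) hx1
            simp; omega
          · exact ov (fl i).1 (m (fl i).1) (m ((fl i).1 + 1)) ((fl i).2 + 1)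
              (hm_mem _ (by omega)) (hm_step (fl i).1 hx1).2 (by omega) (by omega)
        · have hyeq : (fl i).2 = m ((fl i).1 + 1) := by
            have := hyhi hx1; omega
          have e : fl (i+1) = ((fl i).1 + 1, (fl i).2) := by
            rw [hflstep i]; unfold lowStep; rw [if_pos hx1, if_neg hy1]
          rw [e]
          refine ⟨by simp; omega, by simp; omega, by simp; omega, ?_, by simp; omega, ?_⟩
          · intro hlt
            simp only at hlt ⊢
            have := hm_step ((fl i).1 + 1) hlt
            omega
          · have : ((fl i).1 + 1, (fl i).2) = ((fl i).1 + 1, m ((fl i).1 + 1)) := by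
              rw [hyeq]
            rw [this]
            exact hm_mem _ hx1
      · have hxe : (fl i).1 = xmax := by omega
        have e : fl (i+1) = ((fl i).1, (fl i).2 + 1) := by
          rw [hflstep i]; unfold lowStep; rw [if_neg hx1]
        rw [e]
        refine ⟨by simp; omega, by simp; omega, by simp; omega, ?_, by simp; omega, ?_⟩
        · intro hlt; simp only at hlt; omega
        · have e2 : ((fl i).1, (fl i).2 + 1) = (xmax, (fl i).2 + 1) := by rw [hxe]
          rw [e2]
          refine ov xmax (m xmax) ymax ((fl i).2 + 1) (hm_mem xmax (le_refl _)) hcorner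
            ?_ (by omega)
          rw [← hxe]; omega
  have hflN : fl N = (xmax, ymax) := by
    obtain ⟨hsum, hx, -, hyhi, hyax, -⟩ := Il N (le_refl _)
    apply Prod.ext
    · simp; omega
    · simp; omega
  have hflmono : MonoPath fl N := by
    refine ⟨hfl0, fun i _ => ?_⟩
    rw [hflstep i]
    exact lowStep_cases m xmax (fl i)
  have hflmem : ∀ i ≤ N, fl i ∈ S := fun i hi => (Il i hi).2.2.2.2.2
  have hflvisit : ∀ p ∈ S, ∃ i ≤ N, (fl i).1 = p.1 ∧ (fl i).2 ≤ p.2 := by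
    intro p hp
    have hp1 : p.1 ≤ xmax := hxmax_le p hp
    have hp2 : m p.1 ≤ p.2 := hm_le p.1 p.2 hp
    have hp3 : p.2 ≤ ymax := hymax_le p hp
    refine ⟨p.1 + m p.1, by omega, ?_⟩
    obtain ⟨hsum, hx, hylo, hyhi, hyax, -⟩ := Il (p.1 + m p.1) (by omega)
    have hfx : (fl (p.1 + m p.1)).1 = p.1 := by
      rcases lt_trichotomy (fl (p.1 + m p.1)).1 p.1 with h | h | h
      · exfalso
        have h1 := hyhi (by omega)
        have h2 : m ((fl (p.1 + m p.1)).1 + 1) ≤ m p.1 := hm_mono _ _ (by omega) hp1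
        omega
      · exact h
      · exfalso
        have h2 : m p.1 ≤ m (fl (p.1 + m p.1)).1 := hm_mono _ _ (by omega) hx
        omega
    exact ⟨hfx, by omega⟩
  -- ===== upper path =====
  set fu := upPath M with hfu_def
  have hfu0 : fu 0 = (0, 0) := rfl
  have hfustep : ∀ i, fu (i + 1) = upStep M (fu i) := fun i => rfl
  have Iu : ∀ i, i ≤ N → (fu i).1 + (fu i).2 = i ∧ (fu i).1 ≤ xmax ∧
      (fu i).2 ≤ M (fu i).1 ∧ (0 < (fu i).1 → M ((fu i).1 - 1) ≤ (fu i).2) ∧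
      fu i ∈ S := by
    intro i
    induction i with
    | zero =>
      intro _
      rw [hfu0]
      exact ⟨rfl, Nat.zero_le _, Nat.zero_le _, fun h => absurd h (by simp), horigin⟩
    | succ i ih =>
      intro h
      obtain ⟨hsum, hx, hyhi, hylo, hmem⟩ := ih (by omega)
      by_cases hy1 : (fu i).2 < M (fu i).1
      · have e : fu (i+1) = ((fu i).1, (fu i).2 + 1) := by
          rw [hfustep i]; unfold upStep; rw [if_pos hy1]
        rw [e]
        refine ⟨by simp; omega, by simp; omega, by simp; omega, ?_, ?_⟩
        · intro h0; simp only at h0 ⊢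
          have := hylo h0; omega
        · by_cases h0 : (fu i).1 = 0
          · rw [h0] at hy1 ⊢
            exact ov 0 0 (M 0) ((fu i).2 + 1) horigin (hM_mem 0 (Nat.zero_le _))
              (Nat.zero_le _) (by omega)
          · have hbr := hM_bridge ((fu i).1 - 1) (by omega)
            have e2 : (fu i).1 - 1 + 1 = (fu i).1 := by omega
            rw [e2] at hbr
            exact ov (fu i).1 (M ((fu i).1 - 1)) (M (fu i).1) ((fu i).2 + 1)
              hbr (hM_mem _ hx) (by have := hylo (by omega); omega) (by omega)
      · have hyeq : (fu i).2 = M (fu i).1 := by omega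
        have hxlt : (fu i).1 < xmax := by
          by_contra hc
          have hxe : (fu i).1 = xmax := by omega
          rw [hxe] at hyeq
          rw [hMxmax] at hyeq
          omega
        have e : fu (i+1) = ((fu i).1 + 1, (fu i).2) := by
          rw [hfustep i]; unfold upStep; rw [if_neg hy1]
        rw [e]
        refine ⟨by simp; omega, by simp; omega, ?_, ?_, ?_⟩
        · simp only
          have := hM_step (fu i).1 hxlt
          omega
        · intro _; simp only [Nat.add_sub_cancel]
          omega
        · have : ((fu i).1 + 1, (fu i).2) = ((fu i).1 + 1, M (fu i).1) := by rw [hyeq]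
          rw [this]
          exact hM_bridge (fu i).1 hxlt
  have hfuN : fu N = (xmax, ymax) := by
    obtain ⟨hsum, hx, hyhi, -, -⟩ := Iu N (le_refl _)
    have := hM_le_ymax (fu N).1 hx
    apply Prod.ext
    · simp; omega
    · simp; omega
  have hfumono : MonoPath fu N := by
    refine ⟨hfu0, fun i _ => ?_⟩
    rw [hfustep i]
    exact upStep_cases M (fu i)
  have hfumem : ∀ i ≤ N, fu i ∈ S := fun i hi => (Iu i hi).2.2.2.2
  have hfuvisit : ∀ p ∈ S, ∃ j ≤ N, (fu j).1 = p.1 ∧ p.2 ≤ (fu j).2 := by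
    intro p hp
    have hp1 : p.1 ≤ xmax := hxmax_le p hp
    have hp2 : p.2 ≤ M p.1 := hM_ge p.1 p.2 hp
    have hp4 : M p.1 ≤ ymax := hM_le_ymax p.1 hp1
    refine ⟨p.1 + M p.1, by omega, ?_⟩
    obtain ⟨hsum, hx, hyhi, hylo, -⟩ := Iu (p.1 + M p.1) (by omega)
    have hfx : (fu (p.1 + M p.1)).1 = p.1 := by
      rcases lt_trichotomy (fu (p.1 + M p.1)).1 p.1 with h | h | h
      · exfalso
        have h2 : M (fu (p.1 + M p.1)).1 ≤ M p.1 := hM_mono _ _ (by omega) hp1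
        omega
      · exact h
      · exfalso
        have h0 := hylo (by omega)
        have h2 : M p.1 ≤ M ((fu (p.1 + M p.1)).1 - 1) := hM_mono _ _ (by omega) (by omega)
        omega
    exact ⟨hfx, by omega⟩
  -- ===== assemble =====
  refine ⟨⟨oh, ov⟩, ?_, ?_⟩
  · intro A hA B hB
    obtain ⟨fA, hA0, hAn, hAmem, hAs⟩ := pathto (A.1 + A.2) A hA rfl
    obtain ⟨fB, hB0, hBn, hBmem, hBs⟩ := pathto (B.1 + B.2) B hB rfl
    obtain ⟨n, g, hg0, hgn, hgmem, hgs⟩ := n4_join hA0 hB0 hAmem hBmem hAs hBs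
    exact ⟨n, g, by rw [hg0, hAn], by rw [hgn, hBn], hgmem, hgs⟩
  · exact ⟨xmax, ymax, N, N, fl, fu, hflmono, hfumono, hflN, hfuN, hflmem, hfumem,
      fun p hp => ⟨hxmax_le p hp, hymax_le p hp⟩,
      fun p hp => ⟨hflvisit p hp, hfuvisit p hp⟩⟩


theorem antimatroidal_iff_geometric (S : Set (ℕ × ℕ)) :
    IsAntimatroidal S ↔
      (S.Finite ∧ OrthoConvex S ∧ N4Connected S ∧ BoundedByTwoMonotonePaths S) := by
  constructor
  · rintro ⟨hfin, hne, A1, A2⟩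
    obtain ⟨hoc, hconn, hb⟩ := fwd_main hfin hne A1 A2
    exact ⟨hfin, hoc, hconn, hb⟩
  · rintro ⟨hfin, hoc, hconn, hb⟩
    exact backward_dir S hfin hoc hb
end

section
/- Every antimatroidal point set S satisfies S = B_lower ∨ B_upper := { (max(x₁,x₂), max(y₁,y₂)) : (x₁,y₁) ∈ B_lower, (x₂,y₂) ∈ B_upper }. Consequently, S is the union of two maximal chains, so the convex dimension of a two-dimensional poly-antimatroid is at most 2. -/
/-- `p` belongs to the upper boundary of `S` (points with a negative
coordinate, i.e. when `x = 0`, count as missing). -/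
def InUpperBoundary (S : Set (ℕ × ℕ)) (p : ℕ × ℕ) : Prop :=
  p ∈ S ∧ ((p.1 = 0 ∨ (p.1 - 1, p.2) ∉ S) ∨ (p.1, p.2 + 1) ∉ S ∨
    (p.1 = 0 ∨ (p.1 - 1, p.2 + 1) ∉ S))

lemma join_horiz (S : Set (ℕ × ℕ)) (h : IsAntimatroidal S) :
    ∀ a₁ a₂ b₁ b₂, (a₁, a₂) ∈ S → (b₁, b₂) ∈ S → b₁ ≤ a₁ → a₂ ≤ b₂ →
      (a₁, b₂) ∈ S := by
  obtain ⟨-, -, -, hA2⟩ := h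
  intro a₁ a₂ b₁ b₂ ha hb hx hy
  have key : ∀ k, b₁ + k ≤ a₁ → (b₁ + k, b₂) ∈ S := by
    intro k
    induction k with
    | zero => intro _; simpa using hb
    | succ n ih =>
      intro hle
      have hn : b₁ + n ≤ a₁ := by omega
      have hmem : (b₁ + n, b₂) ∈ S := ih hn
      have hlt : b₁ + n < a₁ := by omega
      have := (hA2 a₁ a₂ (b₁ + n) b₂ ha hmem (by omega)).2.2 ⟨hn, hy⟩
      simpa [Nat.add_assoc] using this
  have := key (a₁ - b₁) (by omega)
  simpa [Nat.add_sub_cancel' hx] using this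

lemma join_vert (S : Set (ℕ × ℕ)) (h : IsAntimatroidal S) :
    ∀ a₁ a₂ b₁ b₂, (a₁, a₂) ∈ S → (b₁, b₂) ∈ S → a₁ ≤ b₁ → b₂ ≤ a₂ →
      (b₁, a₂) ∈ S := by
  obtain ⟨-, -, -, hA2⟩ := h
  intro a₁ a₂ b₁ b₂ ha hb hx hy
  have key : ∀ k, b₂ + k ≤ a₂ → (b₁, b₂ + k) ∈ S := by
    intro k
    induction k with
    | zero => intro _; simpa using hb
    | succ n ih =>
      intro hle
      have hn : b₂ + n ≤ a₂ := by omega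
      have hmem : (b₁, b₂ + n) ∈ S := ih hn
      have := (hA2 a₁ a₂ b₁ (b₂ + n) ha hmem (by omega)).2.1 ⟨hx, hn⟩
      simpa [Nat.add_assoc] using this
  have := key (a₂ - b₂) (by omega)
  simpa [Nat.add_sub_cancel' hy] using this

theorem eq_join_of_boundaries (S : Set (ℕ × ℕ)) (h : IsAntimatroidal S) :
    S = {p : ℕ × ℕ | ∃ a b, InLowerBoundary S a ∧ InUpperBoundary S b ∧
          p = (max a.1 b.1, max a.2 b.2)} := by
  ext ⟨x, y⟩
  constructor
  · intro hp
    classical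
    have hexy : ∃ y', (x, y') ∈ S := ⟨y, hp⟩
    have hexx : ∃ x', (x', y) ∈ S := ⟨x, hp⟩
    set ya := Nat.find hexy with hya
    set xb := Nat.find hexx with hxb
    have hamem : (x, ya) ∈ S := Nat.find_spec hexy
    have hbmem : (xb, y) ∈ S := Nat.find_spec hexx
    have hya_le : ya ≤ y := Nat.find_min' hexy hp
    have hxb_le : xb ≤ x := Nat.find_min' hexx hp
    refine ⟨(x, ya), (xb, y), ⟨hamem, Or.inr (Or.inl ?_)⟩, ⟨hbmem, Or.inl ?_⟩, ?_⟩
    · rcases Nat.eq_zero_or_pos ya with h0 | h0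
      · exact Or.inl h0
      · refine Or.inr fun hc => ?_
        exact absurd hc (Nat.find_min hexy (by omega))
    · rcases Nat.eq_zero_or_pos xb with h0 | h0
      · exact Or.inl h0
      · refine Or.inr fun hc => ?_
        exact absurd hc (Nat.find_min hexx (by omega))
    · simp [Nat.max_eq_left hxb_le, Nat.max_eq_right hya_le]
  · rintro ⟨⟨a₁, a₂⟩, ⟨b₁, b₂⟩, ⟨ha, -⟩, ⟨hb, -⟩, hpe⟩
    simp only [Prod.mk.injEq] at hpe
    obtain ⟨rfl, rfl⟩ := hpe
    rcases le_total a₁ b₁ with h1 | h1 <;> rcases le_total a₂ b₂ with h2 | h2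
    · simpa [Nat.max_eq_right h1, Nat.max_eq_right h2] using hb
    · have := join_vert S h a₁ a₂ b₁ b₂ ha hb h1 h2
      simpa [Nat.max_eq_right h1, Nat.max_eq_left h2] using this
    · have := join_horiz S h a₁ a₂ b₁ b₂ ha hb h1 h2
      simpa [Nat.max_eq_left h1, Nat.max_eq_right h2] using this
    · simpa [Nat.max_eq_left h1, Nat.max_eq_left h2] using ha
end

section
/- The union C = C₁ ∪ ... ∪ C_n of a regular sequence of digital cuboids (an n-step staircase) is a poly-antimatroid: it is accessible and closed under componentwise maximum. -/
/-- Accessibility (A1) for a set of points in `ℕ³`: every nonzero point of `C`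
has a point of `C` obtained by decrementing one coordinate. -/
def Accessible3 (C : Set (ℕ × ℕ × ℕ)) : Prop :=
  ∀ p ∈ C, p ≠ (0, 0, 0) →
    (1 ≤ p.1 ∧ (p.1 - 1, p.2.1, p.2.2) ∈ C) ∨
    (1 ≤ p.2.1 ∧ (p.1, p.2.1 - 1, p.2.2) ∈ C) ∨
    (1 ≤ p.2.2 ∧ (p.1, p.2.1, p.2.2 - 1) ∈ C)

/-- Componentwise maximum (multiset union) of two points of `ℕ³`. -/
def sup3 (a b : ℕ × ℕ × ℕ) : ℕ × ℕ × ℕ :=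
  (max a.1 b.1, max a.2.1 b.2.1, max a.2.2 b.2.2)

/-- Componentwise minimum (multiset intersection) of two points of `ℕ³`. -/
def inf3 (a b : ℕ × ℕ × ℕ) : ℕ × ℕ × ℕ :=
  (min a.1 b.1, min a.2.1 b.2.1, min a.2.2 b.2.2)

/-- Componentwise order on points of `ℕ³`. -/
def le3 (a b : ℕ × ℕ × ℕ) : Prop :=
  a.1 ≤ b.1 ∧ a.2.1 ≤ b.2.1 ∧ a.2.2 ≤ b.2.2

/-- The digital cuboid with minimum corner `a` and maximum corner `b`. -/
def Cuboid (a b : ℕ × ℕ × ℕ) : Set (ℕ × ℕ × ℕ) :=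
  {p | a.1 ≤ p.1 ∧ p.1 ≤ b.1 ∧ a.2.1 ≤ p.2.1 ∧ p.2.1 ≤ b.2.1 ∧
       a.2.2 ≤ p.2.2 ∧ p.2.2 ≤ b.2.2}

/-- `lo 0, hi 0`, ..., `lo (n-1), hi (n-1)` are the corners of a regular
sequence of `n` digital cuboids. -/
def RegularSeq (n : ℕ) (lo hi : ℕ → ℕ × ℕ × ℕ) : Prop :=
  1 ≤ n ∧ lo 0 = (0, 0, 0) ∧
  (∀ i < n, le3 (lo i) (hi i) ∧ lo i ≠ hi i) ∧
  (∀ i, i + 1 < n →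
    (le3 (lo i) (lo (i + 1)) ∧ lo i ≠ lo (i + 1)) ∧
    le3 (lo (i + 1)) (hi i) ∧
    (le3 (hi i) (hi (i + 1)) ∧ hi i ≠ hi (i + 1)))

/-- The `n`-step staircase determined by a (regular) sequence of cuboids. -/
def Staircase (n : ℕ) (lo hi : ℕ → ℕ × ℕ × ℕ) : Set (ℕ × ℕ × ℕ) :=
  {p | ∃ i < n, p ∈ Cuboid (lo i) (hi i)}



lemma le3_trans' {a b c : ℕ × ℕ × ℕ} (h1 : le3 a b) (h2 : le3 b c) : le3 a c :=
  ⟨h1.1.trans h2.1, h1.2.1.trans h2.2.1, h1.2.2.trans h2.2.2⟩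

lemma mem_cuboid {a b : ℕ × ℕ × ℕ} {x y z : ℕ}
    (h : a.1 ≤ x ∧ x ≤ b.1 ∧ a.2.1 ≤ y ∧ y ≤ b.2.1 ∧ a.2.2 ≤ z ∧ z ≤ b.2.2) :
    (x, y, z) ∈ Cuboid a b := h

theorem staircase_is_poly_antimatroid (n : ℕ) (lo hi : ℕ → ℕ × ℕ × ℕ)
    (hreg : RegularSeq n lo hi) :
    Accessible3 (Staircase n lo hi) ∧
    (∀ a ∈ Staircase n lo hi, ∀ b ∈ Staircase n lo hi,
      sup3 a b ∈ Staircase n lo hi) := by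
  obtain ⟨hn, hlo0, hbox, hstep⟩ := hreg
  have himono : ∀ i j, i ≤ j → j < n → le3 (hi i) (hi j) := by
    intro i j hij hjn
    induction j with
    | zero =>
      have : i = 0 := Nat.le_zero.mp hij
      subst this; exact ⟨le_rfl, le_rfl, le_rfl⟩
    | succ k ih =>
      rcases Nat.lt_or_ge i (k + 1) with h | h
      · exact le3_trans' (ih (Nat.lt_succ_iff.mp h) (Nat.lt_of_succ_lt hjn))
          (hstep k hjn).2.2.1
      · have : i = k + 1 := le_antisymm hij h
        subst this; exact ⟨le_rfl, le_rfl, le_rfl⟩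
  constructor
  · -- Accessibility
    intro p hp hp0
    obtain ⟨i, hin, h1, h2, h3, h4, h5, h6⟩ := hp
    by_cases hx : (lo i).1 < p.1
    · exact Or.inl ⟨by omega, ⟨i, hin, mem_cuboid (by omega)⟩⟩
    by_cases hy : (lo i).2.1 < p.2.1
    · exact Or.inr (Or.inl ⟨by omega, ⟨i, hin, mem_cuboid (by omega)⟩⟩)
    by_cases hz : (lo i).2.2 < p.2.2
    · exact Or.inr (Or.inr ⟨by omega, ⟨i, hin, mem_cuboid (by omega)⟩⟩)
    -- p = lo i
    have hpx : p.1 = (lo i).1 := by omega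
    have hpy : p.2.1 = (lo i).2.1 := by omega
    have hpz : p.2.2 = (lo i).2.2 := by omega
    have hi0 : i ≠ 0 := by
      intro h; subst h
      apply hp0
      rw [hlo0] at hpx hpy hpz
      exact Prod.ext hpx (Prod.ext hpy hpz)
    have hik : i = (i - 1) + 1 := by omega
    set k := i - 1 with hk
    rw [hik] at hin hpx hpy hpz
    obtain ⟨⟨hlle, hlne⟩, hlohi, _⟩ := hstep k hin
    obtain ⟨a1, a2, a3⟩ := hlle
    obtain ⟨b1, b2, b3⟩ := hlohi
    have hkn' : k < n := by omega
    have hcoord : (lo k).1 < (lo (k+1)).1 ∨ (lo k).2.1 < (lo (k+1)).2.1 ∨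
        (lo k).2.2 < (lo (k+1)).2.2 := by
      by_contra hc
      push_neg at hc
      exact hlne (Prod.ext (by omega) (Prod.ext (by omega) (by omega)))
    rcases hcoord with hc | hc | hc
    · exact Or.inl ⟨by omega, ⟨k, hkn', mem_cuboid (by omega)⟩⟩
    · exact Or.inr (Or.inl ⟨by omega, ⟨k, hkn', mem_cuboid (by omega)⟩⟩)
    · exact Or.inr (Or.inr ⟨by omega, ⟨k, hkn', mem_cuboid (by omega)⟩⟩)
  · -- sup closure
    intro a ha b hb
    obtain ⟨i, hin, ha1, ha2, ha3, ha4, ha5, ha6⟩ := ha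
    obtain ⟨j, hjn, hb1, hb2, hb3, hb4, hb5, hb6⟩ := hb
    rcases le_total i j with hij | hij
    · obtain ⟨m1, m2, m3⟩ := himono i j hij hjn
      exact ⟨j, hjn, mem_cuboid (by omega)⟩
    · obtain ⟨m1, m2, m3⟩ := himono j i hij hin
      exact ⟨i, hin, mem_cuboid (by omega)⟩
end

section
/- For every N ≥ 0, the set S = {(x,y,z) ∈ ℕ³ : x,y ≤ N, z ≤ 1, and z = 1 → x + y ≥ N} is a three-dimensional poly-antimatroid whose convex dimension is at least N+1. -/
lemma chain_mono (len : ℕ) (f : ℕ → ℕ × ℕ × ℕ)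
    (hstep : ∀ j < len,
      f (j+1) = ((f j).1 + 1, (f j).2.1, (f j).2.2) ∨
      f (j+1) = ((f j).1, (f j).2.1 + 1, (f j).2.2) ∨
      f (j+1) = ((f j).1, (f j).2.1, (f j).2.2 + 1)) :
    ∀ j j', j ≤ j' → j' ≤ len →
      (f j).1 ≤ (f j').1 ∧ (f j).2.1 ≤ (f j').2.1 ∧ (f j).2.2 ≤ (f j').2.2 := by
  intro j j' hjj' hj'
  induction j' with
  | zero => interval_cases j; exact ⟨le_refl _, le_refl _, le_refl _⟩
  | succ m ih =>
    rcases Nat.eq_or_lt_of_le hjj' with h | h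
    · subst h; exact ⟨le_refl _, le_refl _, le_refl _⟩
    · have h1 := ih (Nat.lt_succ_iff.mp h) (by omega)
      have h2 := hstep m (by omega)
      rcases h2 with h2 | h2 | h2 <;> rw [h2] <;>
        exact ⟨by simp; omega, by simp; omega, by simp; omega⟩

theorem eppstein_example (N : ℕ) :
    Accessible3 {p : ℕ × ℕ × ℕ |
        p.1 ≤ N ∧ p.2.1 ≤ N ∧ p.2.2 ≤ 1 ∧ (p.2.2 = 1 → N ≤ p.1 + p.2.1)} ∧
    (∀ a ∈ {p : ℕ × ℕ × ℕ |
        p.1 ≤ N ∧ p.2.1 ≤ N ∧ p.2.2 ≤ 1 ∧ (p.2.2 = 1 → N ≤ p.1 + p.2.1)},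
      ∀ b ∈ {p : ℕ × ℕ × ℕ |
        p.1 ≤ N ∧ p.2.1 ≤ N ∧ p.2.2 ≤ 1 ∧ (p.2.2 = 1 → N ≤ p.1 + p.2.1)},
        sup3 a b ∈ {p : ℕ × ℕ × ℕ |
          p.1 ≤ N ∧ p.2.1 ≤ N ∧ p.2.2 ≤ 1 ∧ (p.2.2 = 1 → N ≤ p.1 + p.2.1)}) ∧
    (∀ (k : ℕ) (len : Fin k → ℕ) (f : Fin k → ℕ → ℕ × ℕ × ℕ),
      (∀ i : Fin k,
        f i 0 = (0, 0, 0) ∧ f i (len i) = (N, N, 1) ∧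
        (∀ j ≤ len i, f i j ∈ {p : ℕ × ℕ × ℕ |
          p.1 ≤ N ∧ p.2.1 ≤ N ∧ p.2.2 ≤ 1 ∧ (p.2.2 = 1 → N ≤ p.1 + p.2.1)}) ∧
        (∀ j < len i,
          f i (j + 1) = ((f i j).1 + 1, (f i j).2.1, (f i j).2.2) ∨
          f i (j + 1) = ((f i j).1, (f i j).2.1 + 1, (f i j).2.2) ∨
          f i (j + 1) = ((f i j).1, (f i j).2.1, (f i j).2.2 + 1))) →
      {p : ℕ × ℕ × ℕ |
          p.1 ≤ N ∧ p.2.1 ≤ N ∧ p.2.2 ≤ 1 ∧ (p.2.2 = 1 → N ≤ p.1 + p.2.1)} =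
        {p : ℕ × ℕ × ℕ | ∃ g : Fin k → ℕ, (∀ i, g i ≤ len i) ∧
          p = (Finset.univ.sup (fun i => (f i (g i)).1),
               Finset.univ.sup (fun i => (f i (g i)).2.1),
               Finset.univ.sup (fun i => (f i (g i)).2.2))} →
      N + 1 ≤ k) := by
  refine ⟨?_, ?_, ?_⟩
  · rintro ⟨x, y, z⟩ ⟨hx, hy, hz, hzimp⟩ hne
    simp only [Set.mem_setOf_eq, ne_eq, Prod.mk.injEq] at *
    omega
  · rintro ⟨x1, y1, z1⟩ ⟨hx1, hy1, hz1, h1⟩ ⟨x2, y2, z2⟩ ⟨hx2, hy2, hz2, h2⟩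
    simp only [Set.mem_setOf_eq, sup3] at *
    omega
  · intro k len f hchains hset
    have H : ∀ x : Fin (N + 1), ∃ i : Fin k, ∃ j, j ≤ len i ∧
        f i j = ((x : ℕ), N - (x : ℕ), 1) := by
      intro x
      have hx : (x : ℕ) ≤ N := Nat.lt_succ_iff.mp x.isLt
      have hmem : ((x : ℕ), N - (x : ℕ), (1:ℕ)) ∈ {p : ℕ × ℕ × ℕ |
          p.1 ≤ N ∧ p.2.1 ≤ N ∧ p.2.2 ≤ 1 ∧ (p.2.2 = 1 → N ≤ p.1 + p.2.1)} := by
        show (x : ℕ) ≤ N ∧ N - (x : ℕ) ≤ N ∧ (1:ℕ) ≤ 1 ∧ ((1:ℕ) = 1 → N ≤ (x : ℕ) + (N - (x : ℕ)))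
        exact ⟨hx, by omega, le_refl _, fun _ => by omega⟩
      rw [hset] at hmem
      obtain ⟨g, hg, hp⟩ := hmem
      have hpx : (x : ℕ) = Finset.univ.sup (fun i => (f i (g i)).1) :=
        congrArg Prod.fst hp
      have hpy : N - (x : ℕ) = Finset.univ.sup (fun i => (f i (g i)).2.1) :=
        congrArg (fun p => p.2.1) hp
      have hpz : (1 : ℕ) = Finset.univ.sup (fun i => (f i (g i)).2.2) :=
        congrArg (fun p => p.2.2) hp
      have hz1 : ∃ i ∈ Finset.univ, 1 ≤ (f i (g i)).2.2 := by
        rw [← Finset.le_sup_iff (by norm_num : (⊥:ℕ) < 1)]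
        omega
      obtain ⟨i, -, hzi⟩ := hz1
      refine ⟨i, g i, hg i, ?_⟩
      have hmem' := (hchains i).2.2.1 (g i) (hg i)
      obtain ⟨h1, h2, h3, h4⟩ := hmem'
      have hz : (f i (g i)).2.2 = 1 := le_antisymm h3 hzi
      have hax : (f i (g i)).1 ≤ (x : ℕ) := by
        rw [hpx]; exact Finset.le_sup (f := fun i => (f i (g i)).1) (Finset.mem_univ i)
      have hby : (f i (g i)).2.1 ≤ N - (x : ℕ) := by
        rw [hpy]; exact Finset.le_sup (f := fun i => (f i (g i)).2.1) (Finset.mem_univ i)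
      have hsum := h4 hz
      have hx : (x : ℕ) ≤ N := Nat.lt_succ_iff.mp x.isLt
      have : (f i (g i)).1 = (x : ℕ) ∧ (f i (g i)).2.1 = N - (x : ℕ) := by omega
      exact Prod.ext this.1 (Prod.ext this.2 hz)
    choose F j hjle hfj using H
    have hinj : Function.Injective F := by
      intro x y hxy
      have hmono := chain_mono (len (F x)) (f (F x)) (hchains (F x)).2.2.2
      have hx : (x : ℕ) ≤ N := Nat.lt_succ_iff.mp x.isLt
      have hy : (y : ℕ) ≤ N := Nat.lt_succ_iff.mp y.isLt
      have hfy := hfj y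
      rw [← hxy] at hfy
      have hjy := hjle y
      rw [← hxy] at hjy
      rcases le_total (j x) (j y) with h | h
      · have := hmono (j x) (j y) h hjy
        rw [hfj x, hfy] at this
        simp at this
        exact Fin.ext (by omega)
      · have := hmono (j y) (j x) h (hjle x)
        rw [hfj x, hfy] at this
        simp at this
        exact Fin.ext (by omega)
    have := Fintype.card_le_of_injective F hinj
    simpa using this
end
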